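/- arXiv:2201.00872 — 9 statements merged into one kernel-verified Lean document; each statement's English description precedes it below -/
import Mathlib

section
/- Let A be a finite alphabet. A language L ⊆ A* belongs to B₁ if and only if L satisfies the families of ultrafilter equations E_{ab=ba}, E_{aab=abb} and E_{a=a·a} for all letters a, b ∈ A. -/
open Set

namespace Stmt0

/-- Membership in the Boolean subalgebra of `Set α` generated by a family `S`. -/
inductive GenBool {α : Type*} (S : Set (Set α)) : Set α → Prop
  | basic {s : Set α} : s ∈ S → GenBool S s
  | univ : GenBool S Set.univ
  | compl {s : Set α} : GenBool S s → GenBool S sᶜ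
  | inter {s t : Set α} : GenBool S s → GenBool S t → GenBool S (s ∩ t)

variable {A : Type*}

/-- `c_a(w)`: the set of positions of the word `w` carrying the letter `a`. -/
def contentSet (a : A) (w : List A) : Set ℕ :=
  {i | ∃ h : i < w.length, w.get ⟨i, h⟩ = a}

/-- `L_{◇^a_Q}`. -/
def diamLang (a : A) (Q : Set ℕ) : Set (List A) :=
  {w | (contentSet a w ∩ Q).Nonempty}

/-- The Boolean algebra `B₁`, as a membership predicate. -/
def B1 (A : Type*) : Set (List A) → Prop :=
  GenBool {L | ∃ (a : A) (Q : Set ℕ), L = diamLang a Q}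

/-- `A* ⊗ ℕ`. -/
abbrev Dom1 (A : Type*) : Type _ := {x : List A × ℕ // x.2 < x.1.length}

/-- `A* ⊗ ℕ²`. -/
abbrev Dom2 (A : Type*) : Type _ :=
  {x : List A × ℕ × ℕ // x.2.1 < x.1.length ∧ x.2.2 < x.1.length}

/-- `A* ⊗ ℕ³`. -/
abbrev Dom3 (A : Type*) : Type _ :=
  {x : List A × ℕ × ℕ × ℕ //
    x.2.1 < x.1.length ∧ x.2.2.1 < x.1.length ∧ x.2.2.2 < x.1.length}

/-- `f_{a,b}(w,j₁,j₂) = w(j₁→a)(j₂→b)` if `j₁ ≠ j₂`, and `w` otherwise. -/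
def f2 (a b : A) : Dom2 A → List A := fun x =>
  if x.1.2.1 ≠ x.1.2.2 then (x.1.1.set x.1.2.1 a).set x.1.2.2 b else x.1.1

/-- `f_{a,b,c}(w,j₁,j₂,j₃) = w(j₁→a)(j₂→b)(j₃→c)` if `j₁,j₂,j₃` are pairwise
distinct, and `w` otherwise. -/
def f3 (a b c : A) : Dom3 A → List A := fun x =>
  if x.1.2.1 ≠ x.1.2.2.1 ∧ x.1.2.1 ≠ x.1.2.2.2 ∧ x.1.2.2.1 ≠ x.1.2.2.2 then
    ((x.1.1.set x.1.2.1 a).set x.1.2.2.1 b).set x.1.2.2.2 c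
  else x.1.1

/-- `f_a(w,i) = w(i→a)`. -/
def f1 (a : A) : Dom1 A → List A := fun x => x.1.1.set x.1.2 a

/-- `f_a·a(w,i) = w(i→a).a`. -/
def f1app (a : A) : Dom1 A → List A := fun x => x.1.1.set x.1.2 a ++ [a]

/-- `L` satisfies the family of ultrafilter equations `E_{ab=ba}`. -/
def SatAB (L : Set (List A)) (a b : A) : Prop :=
  ∀ ν : Ultrafilter (Dom2 A),
    Ultrafilter.map (fun x => x.1.2.1) ν = Ultrafilter.map (fun x => x.1.2.2) ν →
      (f2 a b ⁻¹' L ∈ ν ↔ f2 b a ⁻¹' L ∈ ν)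

/-- `L` satisfies the family of ultrafilter equations `E_{aab=abb}`. -/
def SatAAB (L : Set (List A)) (a b : A) : Prop :=
  ∀ ν : Ultrafilter (Dom3 A),
    (Ultrafilter.map (fun x => x.1.2.1) ν = Ultrafilter.map (fun x => x.1.2.2.1) ν ∧
      Ultrafilter.map (fun x => x.1.2.2.1) ν = Ultrafilter.map (fun x => x.1.2.2.2) ν) →
      (f3 a a b ⁻¹' L ∈ ν ↔ f3 a b b ⁻¹' L ∈ ν)

/-- `L` satisfies the family of ultrafilter equations `E_{a=a·a}`. -/
def SatAA (L : Set (List A)) (a : A) : Prop :=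
  ∀ ν : Ultrafilter (Dom1 A),
    Ultrafilter.map (fun x => x.1.2) ν = Ultrafilter.map (fun x => x.1.1.length) ν →
      (f1 a ⁻¹' L ∈ ν ↔ f1app a ⁻¹' L ∈ ν)

/-! ### Helpers -/

attribute [local instance] Classical.propDecidable

lemma uf_inter_mem_iff {I : Type*} {ν : Ultrafilter I} {s t : Set I} :
    s ∩ t ∈ ν ↔ (s ∈ ν ∧ t ∈ ν) := Filter.inter_mem_iff

lemma uf_iff_of_eqOn {I : Type*} (𝒰 : Ultrafilter I) {s t e : Set I} (he : e ∈ 𝒰)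
    (h : ∀ x ∈ e, x ∈ s ↔ x ∈ t) : s ∈ 𝒰 ↔ t ∈ 𝒰 := by
  have key : ∀ {s t : Set I}, (∀ x ∈ e, x ∈ s ↔ x ∈ t) → s ∈ 𝒰 → t ∈ 𝒰 := by
    intro s t hst hs
    have h2 : s ∩ e ∈ 𝒰 := Filter.inter_mem hs he
    exact Filter.mem_of_superset h2 (fun x hx => (hst x hx.2).mp hx.1)
  exact ⟨key h, key (fun x hx => (h x hx).symm)⟩

lemma mem_contentSet {a : A} {w : List A} {i : ℕ} :
    i ∈ contentSet a w ↔ ∃ h : i < w.length, w[i] = a := by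
  simp [contentSet, List.get_eq_getElem]

lemma mem_contentSet_set {w : List A} {i : ℕ} (hi : i < w.length) (a c : A) {p : ℕ} :
    p ∈ contentSet c (w.set i a) ↔ ((p ∈ contentSet c w ∧ p ≠ i) ∨ (p = i ∧ a = c)) := by
  by_cases hp : p < w.length
  · by_cases hpi : p = i
    · subst hpi
      simp [mem_contentSet, hp, List.getElem_set]
    · simp [mem_contentSet, hp, List.getElem_set, Ne.symm hpi, hpi]
  · have h1 : ¬ p < (w.set i a).length := by simpa [List.length_set] using hp
    have h2 : p ≠ i := fun h => hp (h ▸ hi)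
    simp [mem_contentSet, hp, h1, h2]

lemma mem_contentSet_append {w : List A} (a c : A) {p : ℕ} :
    p ∈ contentSet c (w ++ [a]) ↔ (p ∈ contentSet c w ∨ (p = w.length ∧ a = c)) := by
  rcases lt_trichotomy p w.length with hp | hp | hp
  · have hp' : p < (w ++ [a]).length := by simp; omega
    have hne : p ≠ w.length := by omega
    simp [mem_contentSet, hp, hp', List.getElem_append_left hp, hne, Nat.lt_succ_of_lt hp]
  · subst hp
    have hp' : w.length < (w ++ [a]).length := by simp
    simp [mem_contentSet, hp', lt_irrefl, List.getElem_concat_length]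
  · have hp' : ¬ p < (w ++ [a]).length := by simp; omega
    have h2 : ¬ p < w.length := by omega
    have h3 : p ≠ w.length := by omega
    simp only [mem_contentSet]
    constructor
    · rintro ⟨h, -⟩
      exact absurd h (by simp; omega)
    · rintro (⟨h, -⟩ | ⟨h, -⟩) <;> omega

lemma mem_diamLang {c : A} {Q : Set ℕ} {w : List A} :
    w ∈ diamLang c Q ↔ ∃ p, p ∈ contentSet c w ∧ p ∈ Q := Iff.rfl


section FWD
variable {A : Type*}

lemma ite_mem_uf {I : Type*} {ν : Ultrafilter I} {P : Prop} {s : Set I} :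
    (if P then s else ∅) ∈ ν ↔ (P ∧ s ∈ ν) := by
  by_cases hP : P <;> simp [hP, Filter.empty_notMem]

lemma satAB_diam (c : A) (Q : Set ℕ) (a b : A) : SatAB (diamLang c Q) a b := by
  intro ν h
  set J1 : Set (Dom2 A) := (fun x : Dom2 A => x.1.2.1) ⁻¹' Q with hJ1def
  set J2 : Set (Dom2 A) := (fun x : Dom2 A => x.1.2.2) ⁻¹' Q with hJ2def
  have hJ : J1 ∈ ν ↔ J2 ∈ ν := by
    have h1 : J1 ∈ ν ↔ Q ∈ Ultrafilter.map (fun x : Dom2 A => x.1.2.1) ν := Iff.rfl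
    have h2 : J2 ∈ ν ↔ Q ∈ Ultrafilter.map (fun x : Dom2 A => x.1.2.2) ν := Iff.rfl
    rw [h1, h2, h]
  set D : Set (Dom2 A) := {x | x.1.2.1 ≠ x.1.2.2} with hDdef
  by_cases hDm : D ∈ ν
  · set Bse : Set (Dom2 A) :=
      {x | ((contentSet c x.1.1 \ {x.1.2.1, x.1.2.2}) ∩ Q).Nonempty} with hBdef
    have key : ∀ (a b : A), ∀ x ∈ D, (x ∈ f2 a b ⁻¹' diamLang c Q ↔
        (x ∈ Bse ∨ (a = c ∧ x ∈ J1) ∨ (b = c ∧ x ∈ J2))) := by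
      rintro a b ⟨⟨w, i, j⟩, hi, hj⟩ hx
      have hij : i ≠ j := hx
      have hi' : i < (w.set i a).length := by simpa using hi
      simp only [mem_preimage, f2, if_pos hij, mem_diamLang, hBdef, hJ1def, hJ2def,
        mem_setOf_eq, mem_preimage]
      constructor
      · rintro ⟨p, hp, hpQ⟩
        rw [mem_contentSet_set (by simpa using hj)] at hp
        rcases hp with ⟨hp, hpj⟩ | ⟨rfl, rfl⟩
        · rw [mem_contentSet_set hi] at hp
          rcases hp with ⟨hp, hpi⟩ | ⟨rfl, rfl⟩
          · exact Or.inl ⟨p, ⟨hp, by simp [hpi, hpj]⟩, hpQ⟩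
          · exact Or.inr (Or.inl ⟨rfl, hpQ⟩)
        · exact Or.inr (Or.inr ⟨rfl, hpQ⟩)
      · rintro (⟨p, ⟨hp, hpd⟩, hpQ⟩ | ⟨rfl, hiQ⟩ | ⟨rfl, hjQ⟩)
        · refine ⟨p, ?_, hpQ⟩
          simp only [mem_insert_iff, mem_singleton_iff, not_or] at hpd
          rw [mem_contentSet_set (by simpa using hj)]
          exact Or.inl ⟨by rw [mem_contentSet_set hi]; exact Or.inl ⟨hp, hpd.1⟩, hpd.2⟩
        · refine ⟨i, ?_, hiQ⟩
          rw [mem_contentSet_set (by simpa using hj)]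
          exact Or.inl ⟨by rw [mem_contentSet_set hi]; exact Or.inr ⟨rfl, rfl⟩, hij⟩
        · refine ⟨j, ?_, hjQ⟩
          rw [mem_contentSet_set (by simpa using hj)]
          exact Or.inr ⟨rfl, rfl⟩
    have mem_iff : ∀ (a b : A), (f2 a b ⁻¹' diamLang c Q ∈ ν ↔
        (Bse ∈ ν ∨ (a = c ∧ J1 ∈ ν) ∨ (b = c ∧ J2 ∈ ν))) := by
      intro a b
      have e1 : f2 a b ⁻¹' diamLang c Q ∈ ν ↔
          (Bse ∪ ((if a = c then J1 else ∅) ∪ (if b = c then J2 else ∅))) ∈ ν := by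
        refine uf_iff_of_eqOn ν hDm (fun x hx => ?_)
        rw [key a b x hx]
        by_cases hac : a = c <;> by_cases hbc : b = c <;>
          simp [hac, hbc]
      rw [e1, Ultrafilter.union_mem_iff, Ultrafilter.union_mem_iff, ite_mem_uf, ite_mem_uf]
    rw [mem_iff a b, mem_iff b a]
    tauto
  · have hDc : Dᶜ ∈ ν := (Ultrafilter.compl_mem_iff_notMem).mpr hDm
    refine uf_iff_of_eqOn ν hDc (fun x hx => ?_)
    have : ¬ x.1.2.1 ≠ x.1.2.2 := hx
    simp [mem_preimage, f2, if_neg this]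

lemma satAA_diam (c : A) (Q : Set ℕ) (a : A) : SatAA (diamLang c Q) a := by
  intro ν h
  set J1 : Set (Dom1 A) := (fun x : Dom1 A => x.1.2) ⁻¹' Q with hJ1def
  set J2 : Set (Dom1 A) := (fun x : Dom1 A => x.1.1.length) ⁻¹' Q with hJ2def
  have hJ : J1 ∈ ν ↔ J2 ∈ ν := by
    have h1 : J1 ∈ ν ↔ Q ∈ Ultrafilter.map (fun x : Dom1 A => x.1.2) ν := Iff.rfl
    have h2 : J2 ∈ ν ↔ Q ∈ Ultrafilter.map (fun x : Dom1 A => x.1.1.length) ν := Iff.rfl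
    rw [h1, h2, h]
  set Bse : Set (Dom1 A) :=
    {x | ((contentSet c x.1.1 \ {x.1.2}) ∩ Q).Nonempty} with hBdef
  have key1 : ∀ x : Dom1 A, (x ∈ f1 a ⁻¹' diamLang c Q ↔
      (x ∈ Bse ∨ (a = c ∧ x ∈ J1))) := by
    rintro ⟨⟨w, i⟩, hi⟩
    simp only [mem_preimage, f1, mem_diamLang, hBdef, hJ1def, mem_setOf_eq, mem_preimage]
    constructor
    · rintro ⟨p, hp, hpQ⟩
      rw [mem_contentSet_set hi] at hp
      rcases hp with ⟨hp, hpi⟩ | ⟨rfl, rfl⟩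
      · exact Or.inl ⟨p, ⟨hp, by simp [hpi]⟩, hpQ⟩
      · exact Or.inr ⟨rfl, hpQ⟩
    · rintro (⟨p, ⟨hp, hpd⟩, hpQ⟩ | ⟨rfl, hiQ⟩)
      · simp only [mem_singleton_iff] at hpd
        exact ⟨p, by rw [mem_contentSet_set hi]; exact Or.inl ⟨hp, hpd⟩, hpQ⟩
      · exact ⟨i, by rw [mem_contentSet_set hi]; exact Or.inr ⟨rfl, rfl⟩, hiQ⟩
  have key2 : ∀ x : Dom1 A, (x ∈ f1app a ⁻¹' diamLang c Q ↔
      (x ∈ Bse ∨ (a = c ∧ x ∈ J1) ∨ (a = c ∧ x ∈ J2))) := by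
    rintro ⟨⟨w, i⟩, hi⟩
    simp only [mem_preimage, f1app, mem_diamLang, hBdef, hJ1def, hJ2def, mem_setOf_eq,
      mem_preimage]
    have hlen : (w.set i a).length = w.length := by simp
    constructor
    · rintro ⟨p, hp, hpQ⟩
      rw [mem_contentSet_append] at hp
      rcases hp with hp | ⟨rfl, rfl⟩
      · rw [mem_contentSet_set hi] at hp
        rcases hp with ⟨hp, hpi⟩ | ⟨rfl, rfl⟩
        · exact Or.inl ⟨p, ⟨hp, by simp [hpi]⟩, hpQ⟩
        · exact Or.inr (Or.inl ⟨rfl, hpQ⟩)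
      · exact Or.inr (Or.inr ⟨rfl, by rwa [hlen] at hpQ⟩)
    · rintro (⟨p, ⟨hp, hpd⟩, hpQ⟩ | ⟨rfl, hiQ⟩ | ⟨rfl, hlQ⟩)
      · simp only [mem_singleton_iff] at hpd
        refine ⟨p, ?_, hpQ⟩
        rw [mem_contentSet_append]
        exact Or.inl (by rw [mem_contentSet_set hi]; exact Or.inl ⟨hp, hpd⟩)
      · refine ⟨i, ?_, hiQ⟩
        rw [mem_contentSet_append]
        exact Or.inl (by rw [mem_contentSet_set hi]; exact Or.inr ⟨rfl, rfl⟩)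
      · refine ⟨w.length, ?_, hlQ⟩
        rw [mem_contentSet_append]
        exact Or.inr ⟨by rw [hlen], rfl⟩
  have m1 : f1 a ⁻¹' diamLang c Q ∈ ν ↔ (Bse ∈ ν ∨ (a = c ∧ J1 ∈ ν)) := by
    have : f1 a ⁻¹' diamLang c Q = Bse ∪ (if a = c then J1 else ∅) := by
      ext x; rw [key1 x]; by_cases hac : a = c <;> simp [hac]
    rw [this, Ultrafilter.union_mem_iff, ite_mem_uf]
  have m2 : f1app a ⁻¹' diamLang c Q ∈ ν ↔
      (Bse ∈ ν ∨ (a = c ∧ J1 ∈ ν) ∨ (a = c ∧ J2 ∈ ν)) := by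
    have : f1app a ⁻¹' diamLang c Q =
        Bse ∪ ((if a = c then J1 else ∅) ∪ (if a = c then J2 else ∅)) := by
      ext x; rw [key2 x]; by_cases hac : a = c <;> simp [hac]
    rw [this, Ultrafilter.union_mem_iff, Ultrafilter.union_mem_iff, ite_mem_uf, ite_mem_uf]
  rw [m1, m2]
  tauto

end FWD

lemma satAAB_diam (c : A) (Q : Set ℕ) (a b : A) : SatAAB (diamLang c Q) a b := by
  intro ν h
  obtain ⟨h12, h23⟩ := h
  set J1 : Set (Dom3 A) := (fun x : Dom3 A => x.1.2.1) ⁻¹' Q with hJ1def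
  set J2 : Set (Dom3 A) := (fun x : Dom3 A => x.1.2.2.1) ⁻¹' Q with hJ2def
  set J3 : Set (Dom3 A) := (fun x : Dom3 A => x.1.2.2.2) ⁻¹' Q with hJ3def
  have hJ12 : J1 ∈ ν ↔ J2 ∈ ν := by
    have h1 : J1 ∈ ν ↔ Q ∈ Ultrafilter.map (fun x : Dom3 A => x.1.2.1) ν := Iff.rfl
    have h2 : J2 ∈ ν ↔ Q ∈ Ultrafilter.map (fun x : Dom3 A => x.1.2.2.1) ν := Iff.rfl
    rw [h1, h2, h12]
  have hJ23 : J2 ∈ ν ↔ J3 ∈ ν := by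
    have h1 : J2 ∈ ν ↔ Q ∈ Ultrafilter.map (fun x : Dom3 A => x.1.2.2.1) ν := Iff.rfl
    have h2 : J3 ∈ ν ↔ Q ∈ Ultrafilter.map (fun x : Dom3 A => x.1.2.2.2) ν := Iff.rfl
    rw [h1, h2, h23]
  set D : Set (Dom3 A) :=
    {x | x.1.2.1 ≠ x.1.2.2.1 ∧ x.1.2.1 ≠ x.1.2.2.2 ∧ x.1.2.2.1 ≠ x.1.2.2.2} with hDdef
  by_cases hDm : D ∈ ν
  · set Bse : Set (Dom3 A) :=
      {x | ((contentSet c x.1.1 \ {x.1.2.1, x.1.2.2.1, x.1.2.2.2}) ∩ Q).Nonempty} with hBdef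
    have key : ∀ (a b c' : A), ∀ x ∈ D, (x ∈ f3 a b c' ⁻¹' diamLang c Q ↔
        (x ∈ Bse ∨ (a = c ∧ x ∈ J1) ∨ (b = c ∧ x ∈ J2) ∨ (c' = c ∧ x ∈ J3))) := by
      rintro a b c' ⟨⟨w, i, j, k⟩, hi, hj, hk⟩ hx
      obtain ⟨hij, hik, hjk⟩ : i ≠ j ∧ i ≠ k ∧ j ≠ k := hx
      have hj1 : j < (w.set i a).length := by simpa using hj
      have hk2 : k < ((w.set i a).set j b).length := by simpa using hk
      simp only [mem_preimage, f3, if_pos (⟨hij, hik, hjk⟩ : i ≠ j ∧ i ≠ k ∧ j ≠ k),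
        mem_diamLang, hBdef, hJ1def, hJ2def, hJ3def, mem_setOf_eq, mem_preimage]
      constructor
      · rintro ⟨p, hp, hpQ⟩
        rw [mem_contentSet_set hk2] at hp
        rcases hp with ⟨hp, hpk⟩ | ⟨rfl, rfl⟩
        · rw [mem_contentSet_set hj1] at hp
          rcases hp with ⟨hp, hpj⟩ | ⟨rfl, rfl⟩
          · rw [mem_contentSet_set hi] at hp
            rcases hp with ⟨hp, hpi⟩ | ⟨rfl, rfl⟩
            · exact Or.inl ⟨p, ⟨hp, by simp [hpi, hpj, hpk]⟩, hpQ⟩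
            · exact Or.inr (Or.inl ⟨rfl, hpQ⟩)
          · exact Or.inr (Or.inr (Or.inl ⟨rfl, hpQ⟩))
        · exact Or.inr (Or.inr (Or.inr ⟨rfl, hpQ⟩))
      · have base : ∀ p, p ∈ contentSet c w → p ≠ i → p ≠ j → p ≠ k →
            p ∈ contentSet c (((w.set i a).set j b).set k c') := by
          intro p hp hpi hpj hpk
          rw [mem_contentSet_set hk2]
          refine Or.inl ⟨?_, hpk⟩
          rw [mem_contentSet_set hj1]
          refine Or.inl ⟨?_, hpj⟩
          rw [mem_contentSet_set hi]
          exact Or.inl ⟨hp, hpi⟩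
        rintro (⟨p, ⟨hp, hpd⟩, hpQ⟩ | ⟨rfl, hiQ⟩ | ⟨rfl, hjQ⟩ | ⟨rfl, hkQ⟩)
        · simp only [mem_insert_iff, mem_singleton_iff, not_or] at hpd
          exact ⟨p, base p hp hpd.1 hpd.2.1 hpd.2.2, hpQ⟩
        · refine ⟨i, ?_, hiQ⟩
          rw [mem_contentSet_set hk2]
          refine Or.inl ⟨?_, hik⟩
          rw [mem_contentSet_set hj1]
          refine Or.inl ⟨?_, hij⟩
          rw [mem_contentSet_set hi]
          exact Or.inr ⟨rfl, rfl⟩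
        · refine ⟨j, ?_, hjQ⟩
          rw [mem_contentSet_set hk2]
          refine Or.inl ⟨?_, hjk⟩
          rw [mem_contentSet_set hj1]
          exact Or.inr ⟨rfl, rfl⟩
        · refine ⟨k, ?_, hkQ⟩
          rw [mem_contentSet_set hk2]
          exact Or.inr ⟨rfl, rfl⟩
    have mem_iff : ∀ (a b c' : A), (f3 a b c' ⁻¹' diamLang c Q ∈ ν ↔
        (Bse ∈ ν ∨ (a = c ∧ J1 ∈ ν) ∨ (b = c ∧ J2 ∈ ν) ∨ (c' = c ∧ J3 ∈ ν))) := by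
      intro a b c'
      have e1 : f3 a b c' ⁻¹' diamLang c Q ∈ ν ↔
          (Bse ∪ ((if a = c then J1 else ∅) ∪
            ((if b = c then J2 else ∅) ∪ (if c' = c then J3 else ∅)))) ∈ ν := by
        refine uf_iff_of_eqOn ν hDm (fun x hx => ?_)
        rw [key a b c' x hx]
        by_cases h1 : a = c <;> by_cases h2 : b = c <;> by_cases h3 : c' = c <;>
          simp [h1, h2, h3]
      rw [e1, Ultrafilter.union_mem_iff, Ultrafilter.union_mem_iff,
        Ultrafilter.union_mem_iff, ite_mem_uf, ite_mem_uf, ite_mem_uf]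
    rw [mem_iff a a b, mem_iff a b b]
    tauto
  · have hDc : Dᶜ ∈ ν := (Ultrafilter.compl_mem_iff_notMem).mpr hDm
    refine uf_iff_of_eqOn ν hDc (fun x hx => ?_)
    have hx' : ¬ (x.1.2.1 ≠ x.1.2.2.1 ∧ x.1.2.1 ≠ x.1.2.2.2 ∧ x.1.2.2.1 ≠ x.1.2.2.2) := hx
    simp [mem_preimage, f3, if_neg hx']

/-- Closure of the three satisfaction predicates under Boolean operations. -/
lemma sat_univ_inter_compl (a b : A) :
    (SatAB (univ : Set (List A)) a b ∧ SatAAB (univ : Set (List A)) a b ∧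
      SatAA (univ : Set (List A)) a) ∧
    (∀ L : Set (List A), SatAB L a b → SatAB Lᶜ a b) := by
  constructor
  · refine ⟨fun ν _ => by simp, fun ν _ => by simp, fun ν _ => by simp⟩
  · intro L hL ν hν
    have := hL ν hν
    simp only [preimage_compl, Ultrafilter.compl_mem_iff_notMem]
    tauto

lemma satAB_compl {L : Set (List A)} {a b : A} (h : SatAB L a b) : SatAB Lᶜ a b := by
  intro ν hν
  have := h ν hν
  simp only [preimage_compl, Ultrafilter.compl_mem_iff_notMem]
  tauto

lemma satAB_inter {L M : Set (List A)} {a b : A} (hL : SatAB L a b) (hM : SatAB M a b) :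
    SatAB (L ∩ M) a b := by
  intro ν hν
  have h1 := hL ν hν
  have h2 := hM ν hν
  simp only [preimage_inter, uf_inter_mem_iff]
  tauto

lemma satAAB_compl {L : Set (List A)} {a b : A} (h : SatAAB L a b) : SatAAB Lᶜ a b := by
  intro ν hν
  have := h ν hν
  simp only [preimage_compl, Ultrafilter.compl_mem_iff_notMem]
  tauto

lemma satAAB_inter {L M : Set (List A)} {a b : A} (hL : SatAAB L a b) (hM : SatAAB M a b) :
    SatAAB (L ∩ M) a b := by
  intro ν hν
  have h1 := hL ν hν
  have h2 := hM ν hν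
  simp only [preimage_inter, uf_inter_mem_iff]
  tauto

lemma satAA_compl {L : Set (List A)} {a : A} (h : SatAA L a) : SatAA Lᶜ a := by
  intro ν hν
  have := h ν hν
  simp only [preimage_compl, Ultrafilter.compl_mem_iff_notMem]
  tauto

lemma satAA_inter {L M : Set (List A)} {a : A} (hL : SatAA L a) (hM : SatAA M a) :
    SatAA (L ∩ M) a := by
  intro ν hν
  have h1 := hL ν hν
  have h2 := hM ν hν
  simp only [preimage_inter, uf_inter_mem_iff]
  tauto

theorem forward {L : Set (List A)} (h : B1 A L) :
    ∀ a b : A, SatAB L a b ∧ SatAAB L a b ∧ SatAA L a := by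
  induction h with
  | basic hs =>
      obtain ⟨c, Q, rfl⟩ := hs
      exact fun a b => ⟨satAB_diam c Q a b, satAAB_diam c Q a b, satAA_diam c Q a⟩
  | univ => exact fun a b => ⟨fun ν _ => by simp, fun ν _ => by simp, fun ν _ => by simp⟩
  | compl _ ih =>
      exact fun a b => ⟨satAB_compl (ih a b).1, satAAB_compl (ih a b).2.1,
        satAA_compl (ih a b).2.2⟩
  | inter _ _ ih1 ih2 =>
      exact fun a b => ⟨satAB_inter (ih1 a b).1 (ih2 a b).1,
        satAAB_inter (ih1 a b).2.1 (ih2 a b).2.1, satAA_inter (ih1 a b).2.2 (ih2 a b).2.2⟩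

/-! ### The converse direction: combinatorial machinery -/

section CONV
variable {A : Type*}

lemma list_set_self (l : List A) (i : ℕ) (h : i < l.length) : l.set i l[i] = l := by
  apply List.ext_getElem <;> simp [List.getElem_set]

lemma list_set_self' {l : List A} {i : ℕ} {b : A} (h : i < l.length) (hb : l[i] = b) :
    l.set i b = l := by rw [← hb]; exact list_set_self l i h

/-- `T`-equivalence of positions. -/
def eqv (T : Finset (Set ℕ)) (i j : ℕ) : Prop := ∀ Q ∈ T, (i ∈ Q ↔ j ∈ Q)

lemma eqv_refl (T : Finset (Set ℕ)) (i : ℕ) : eqv T i i := fun _ _ => Iff.rfl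

lemma eqv_symm {T : Finset (Set ℕ)} {i j : ℕ} (h : eqv T i j) : eqv T j i :=
  fun Q hQ => (h Q hQ).symm

lemma eqv_trans {T : Finset (Set ℕ)} {i j k : ℕ} (h1 : eqv T i j) (h2 : eqv T j k) :
    eqv T i k := fun Q hQ => (h1 Q hQ).trans (h2 Q hQ)

/-- The word `w` has the letter `a` at some position `T`-equivalent to `i`. -/
def hasL (T : Finset (Set ℕ)) (w : List A) (a : A) (i : ℕ) : Prop :=
  ∃ j, ∃ h : j < w.length, w[j] = a ∧ eqv T i j

/-- Both words have the same letters in the same blocks of the partition induced by `T`. -/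
def SameProf (T : Finset (Set ℕ)) (u v : List A) : Prop :=
  ∀ (a : A) (i : ℕ), hasL T u a i ↔ hasL T v a i

lemma sameProf_refl (T : Finset (Set ℕ)) (u : List A) : SameProf T u u :=
  fun _ _ => Iff.rfl

lemma sameProf_symm {T : Finset (Set ℕ)} {u v : List A} (h : SameProf T u v) :
    SameProf T v u := fun a i => (h a i).symm

lemma sameProf_trans {T : Finset (Set ℕ)} {u v w : List A} (h1 : SameProf T u v)
    (h2 : SameProf T v w) : SameProf T u w := fun a i => (h1 a i).trans (h2 a i)

/-- Elementary rewriting steps allowed by the three families of equations, respecting `T`. -/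
inductive Step (T : Finset (Set ℕ)) : List A → List A → Prop
  | swap (a b : A) (p : Dom2 A) (he : eqv T p.1.2.1 p.1.2.2) : Step T (f2 a b p) (f2 b a p)
  | triple (a b : A) (p : Dom3 A) (h12 : eqv T p.1.2.1 p.1.2.2.1)
      (h23 : eqv T p.1.2.2.1 p.1.2.2.2) : Step T (f3 a a b p) (f3 a b b p)
  | app (a : A) (p : Dom1 A) (he : eqv T p.1.2 p.1.1.length) : Step T (f1 a p) (f1app a p)

def SymStep (T : Finset (Set ℕ)) (u v : List A) : Prop := Step T u v ∨ Step T v u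

lemma symStep_symm {T : Finset (Set ℕ)} : Symmetric (SymStep (A := A) T) :=
  fun _ _ h => h.elim Or.inr Or.inl

def Chain (T : Finset (Set ℕ)) : List A → List A → Prop :=
  Relation.ReflTransGen (SymStep T)

lemma chain_symm {T : Finset (Set ℕ)} {u v : List A} (h : Chain T u v) : Chain T v u :=
  (@Relation.ReflTransGen.symmetric _ _ ⟨fun _ _ h => symStep_symm h⟩).symm _ _ h

lemma chain_trans {T : Finset (Set ℕ)} {u v w : List A} (h1 : Chain T u v)
    (h2 : Chain T v w) : Chain T u w := Relation.ReflTransGen.trans h1 h2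

/-- The usable form of the swap move: exchange the letters at two `T`-equivalent
positions. -/
lemma step_swap {T : Finset (Set ℕ)} (w : List A) (i j : ℕ) (hi : i < w.length)
    (hj : j < w.length) (hij : i ≠ j) (he : eqv T i j) :
    SymStep T w ((w.set i w[j]).set j w[i]) := by
  have h := Step.swap (T := T) (w[j]) (w[i]) ⟨(w, i, j), hi, hj⟩ he
  simp only [f2, if_pos (show i ≠ j from hij)] at h
  rw [list_set_self w i hi] at h
  have hji : (w.set i w[i]) = w := list_set_self w i hi
  refine Or.inr ?_
  have h2 : (w.set j w[j]) = w := list_set_self w j hj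
  simpa [h2] using h

/-- The usable form of the triple move: if `T`-equivalent distinct positions `i, j, k`
carry the letters `a, a, b`, the letter at `j` may be replaced by `b`. -/
lemma step_replace {T : Finset (Set ℕ)} (w : List A) (i j k : ℕ) (hi : i < w.length)
    (hj : j < w.length) (hk : k < w.length) (hij : i ≠ j) (hik : i ≠ k) (hjk : j ≠ k)
    (heij : eqv T i j) (hejk : eqv T j k) {a b : A}
    (hwi : w[i] = a) (hwj : w[j] = a) (hwk : w[k] = b) :
    SymStep T w (w.set j b) := by
  have h := Step.triple (T := T) a b ⟨(w, i, j, k), hi, hj, hk⟩ heij hejk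
  simp only [f3, if_pos (show i ≠ j ∧ i ≠ k ∧ j ≠ k from ⟨hij, hik, hjk⟩)] at h
  rw [list_set_self' hi hwi, list_set_self' hj hwj, list_set_self' hk hwk] at h
  rw [list_set_self' (l := w.set j b) (by simpa using hk)
    (by rw [List.getElem_set]; simp [Ne.symm hjk, hwk])] at h
  exact Or.inl h

/-- The usable form of the append move. -/
lemma step_app {T : Finset (Set ℕ)} (w : List A) (i : ℕ) (hi : i < w.length)
    (he : eqv T i w.length) {a : A} (ha : w[i] = a) :
    SymStep T w (w ++ [a]) := by
  have h := Step.app (T := T) a ⟨(w, i), hi⟩ he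
  simp only [f1, f1app] at h
  rw [list_set_self' hi ha] at h
  exact Or.inl h

end CONV

section CONV2
variable {A : Type*}

lemma sameProf_swap {T : Finset (Set ℕ)} (u : List A) (i j : ℕ) (hi : i < u.length)
    (hj : j < u.length) (hij : i ≠ j) (he : eqv T i j) :
    SameProf T u ((u.set i u[j]).set j u[i]) := by
  set v := (u.set i u[j]).set j u[i] with hv
  have hlen : v.length = u.length := by simp [hv]
  have hvj : v[j]'(by omega) = u[i] := by
    simp [hv, List.getElem_set]
  have hvi : v[i]'(by omega) = u[j] := by
    simp [hv, List.getElem_set, Ne.symm hij, hij]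
  have hvm : ∀ m (hm : m < u.length), m ≠ i → m ≠ j → v[m]'(by omega) = u[m] := by
    intro m hm h1 h2
    simp [hv, List.getElem_set, Ne.symm h1, Ne.symm h2]
  intro c r
  constructor
  · rintro ⟨m, hm, hcm, hem⟩
    by_cases h1 : m = i
    · subst h1
      exact ⟨j, by omega, by rw [hvj]; exact hcm, eqv_trans hem he⟩
    · by_cases h2 : m = j
      · subst h2
        exact ⟨i, by omega, by rw [hvi]; exact hcm, eqv_trans hem (eqv_symm he)⟩
      · exact ⟨m, by omega, by rw [hvm m hm h1 h2]; exact hcm, hem⟩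
  · rintro ⟨m, hm, hcm, hem⟩
    have hm' : m < u.length := by omega
    by_cases h1 : m = i
    · subst h1
      refine ⟨j, hj, ?_, eqv_trans hem he⟩
      rw [hvi] at hcm; exact hcm
    · by_cases h2 : m = j
      · subst h2
        refine ⟨i, hi, ?_, eqv_trans hem (eqv_symm he)⟩
        rw [hvj] at hcm; exact hcm
      · exact ⟨m, hm', by rw [hvm m hm' h1 h2] at hcm; exact hcm, hem⟩

lemma sameProf_replace {T : Finset (Set ℕ)} (u : List A) {i j k : ℕ} {a b : A}
    (hi : i < u.length) (hj : j < u.length) (hk : k < u.length)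
    (heij : eqv T i j) (hejk : eqv T j k) (hij : i ≠ j) (hjk : j ≠ k)
    (hwi : u[i] = a) (hwj : u[j] = a) (hwk : u[k] = b) :
    SameProf T u (u.set j b) := by
  set v := u.set j b with hv
  have hlen : v.length = u.length := by simp [hv]
  have hvj : v[j]'(by omega) = b := by simp [hv, List.getElem_set]
  have hvm : ∀ m (hm : m < u.length), m ≠ j → v[m]'(by omega) = u[m] := by
    intro m hm h1
    simp [hv, List.getElem_set, Ne.symm h1]
  intro c r
  constructor
  · rintro ⟨m, hm, hcm, hem⟩
    by_cases h1 : m = j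
    · subst h1
      refine ⟨i, by omega, ?_, eqv_trans hem (eqv_symm heij)⟩
      rw [hvm i hi hij, hwi, ← hwj]
      exact hcm
    · exact ⟨m, by omega, by rw [hvm m hm h1]; exact hcm, hem⟩
  · rintro ⟨m, hm, hcm, hem⟩
    have hm' : m < u.length := by omega
    by_cases h1 : m = j
    · subst h1
      rw [hvj] at hcm
      exact ⟨k, hk, by rw [hwk, ← hcm], eqv_trans hem hejk⟩
    · exact ⟨m, hm', by rw [hvm m hm' h1] at hcm; exact hcm, hem⟩

lemma sameProf_append {T : Finset (Set ℕ)} (w : List A) {c : A}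
    (hc : hasL T w c w.length) : SameProf T w (w ++ [c]) := by
  obtain ⟨j, hj, hwj, hej⟩ := hc
  intro x r
  constructor
  · rintro ⟨m, hm, hxm, hem⟩
    refine ⟨m, by simp; omega, ?_, hem⟩
    rw [List.getElem_append_left hm]
    exact hxm
  · rintro ⟨m, hm, hxm, hem⟩
    have hm' : m < w.length + 1 := by simpa using hm
    by_cases h1 : m = w.length
    · subst h1
      have hxc : c = x := by
        rw [← hxm]
        exact (List.getElem_concat_length (l := w) (a := c) (i := w.length) rfl hm).symm
      exact ⟨j, hj, by rw [hwj, hxc], eqv_trans hem hej⟩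
    · have hm2 : m < w.length := by omega
      exact ⟨m, hm2, by rw [List.getElem_append_left hm2] at hxm; exact hxm, hem⟩

/-- Mismatch positions of two words. -/
noncomputable def Mis (u v : List A) : Finset ℕ :=
  (Finset.range u.length).filter (fun i => u[i]? ≠ v[i]?)

lemma mem_Mis {u v : List A} (hl : u.length = v.length) {i : ℕ} :
    i ∈ Mis u v ↔ ∃ h : i < u.length, u[i] ≠ v[i]'(hl ▸ h) := by
  unfold Mis
  rw [Finset.mem_filter, Finset.mem_range]
  constructor
  · rintro ⟨h1, h2⟩
    refine ⟨h1, fun hEq => h2 ?_⟩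
    rw [List.getElem?_eq_getElem h1, List.getElem?_eq_getElem (hl ▸ h1), hEq]
  · rintro ⟨h1, h2⟩
    refine ⟨h1, fun hEq => h2 ?_⟩
    rw [List.getElem?_eq_getElem h1, List.getElem?_eq_getElem (hl ▸ h1)] at hEq
    exact Option.some_injective _ hEq

lemma eq_of_mis_empty {u v : List A} (hl : u.length = v.length)
    (h : ∀ i, i ∉ Mis u v) : u = v := by
  apply List.ext_getElem hl
  intro i h1 h2
  by_contra hne
  exact h i ((mem_Mis hl).mpr ⟨h1, hne⟩)

lemma conn_aux {T : Finset (Set ℕ)} :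
    ∀ d : ℕ, ∀ u v : List A, u.length = v.length → SameProf T u v →
      (Mis u v).card ≤ d → Chain T u v := by
  intro d
  induction d with
  | zero =>
    intro u v hl hp hc
    have : u = v := eq_of_mis_empty hl (fun i hi => by
      have := Finset.card_pos.mpr ⟨i, hi⟩; omega)
    exact this ▸ Relation.ReflTransGen.refl
  | succ d ih =>
    intro u v hl hp hc
    by_cases hM : Mis u v = ∅
    · have : u = v := eq_of_mis_empty hl (fun i hi => by simp [hM] at hi)
      exact this ▸ Relation.ReflTransGen.refl
    obtain ⟨i₀, hi₀M⟩ := Finset.nonempty_iff_ne_empty.mpr hM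
    obtain ⟨hi₀, hne⟩ := (mem_Mis hl).mp hi₀M
    have hi₀v : i₀ < v.length := hl ▸ hi₀
    have hab : u[i₀] ≠ v[i₀]'hi₀v := hne
    -- u has the letter `v[i₀]` somewhere in the block of `i₀`
    have hua : hasL T u (v[i₀]'hi₀v) i₀ := (hp _ i₀).mpr ⟨i₀, hi₀v, rfl, eqv_refl T i₀⟩
    obtain ⟨j₀, hj₀, huj₀, hej₀⟩ := hua
    have hj₀i₀ : j₀ ≠ i₀ := by
      intro h; subst h; exact hab huj₀
    by_cases hc2 : ∃ i₁, ∃ h : i₁ < u.length, u[i₁] = u[i₀] ∧ eqv T i₀ i₁ ∧ i₁ ≠ i₀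
    · -- Case A : replace the letter at `i₀` using the triple move
      obtain ⟨i₁, hi₁, hui₁, hei₁, hi₁i₀⟩ := hc2
      have hi₁j₀ : i₁ ≠ j₀ := by
        intro h; subst h; exact hab (by rw [← hui₁, huj₀])
      set u' := u.set i₀ (v[i₀]'hi₀v) with hu'
      have hstep : SymStep T u u' :=
        step_replace u i₁ i₀ j₀ hi₁ hi₀ hj₀ hi₁i₀ hi₁j₀ (Ne.symm hj₀i₀)
          (eqv_symm hei₁) hej₀ hui₁ rfl huj₀
      have hprof : SameProf T u u' :=
        sameProf_replace u hi₁ hi₀ hj₀ (eqv_symm hei₁) hej₀ hi₁i₀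
          (Ne.symm hj₀i₀) hui₁ rfl huj₀
      have hlen' : u'.length = u.length := by simp [hu']
      have hsub : Mis u' v ⊆ (Mis u v).erase i₀ := by
        intro m hm
        obtain ⟨hm1, hm2⟩ := (mem_Mis (by omega)).mp hm
        have hmu : m < u.length := by omega
        by_cases h1 : m = i₀
        · subst h1
          exact absurd (by simp [hu', List.getElem_set]) hm2
        · rw [Finset.mem_erase]
          refine ⟨h1, (mem_Mis hl).mpr ⟨hmu, ?_⟩⟩
          rw [show u[m] = u'[m]'(by omega) by simp [hu', List.getElem_set, Ne.symm h1]]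
          exact hm2
      have hcard2 : (Mis u' v).card ≤ d := by
        calc (Mis u' v).card ≤ ((Mis u v).erase i₀).card := Finset.card_le_card hsub
          _ = (Mis u v).card - 1 := Finset.card_erase_of_mem hi₀M
          _ ≤ d := by omega
      exact Relation.ReflTransGen.head hstep
        (ih u' v (by omega) (sameProf_trans (sameProf_symm hprof) hp) hcard2)
    · -- Case B : swap inside `v`
      have hvb : hasL T v (u[i₀]) i₀ := (hp _ i₀).mp ⟨i₀, hi₀, rfl, eqv_refl T i₀⟩
      obtain ⟨j₁, hj₁, hvj₁, hej₁⟩ := hvb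
      have hj₁i₀ : j₁ ≠ i₀ := by
        intro h; subst h; exact hab hvj₁.symm
      have huj₁ : u[j₁]'(by omega) ≠ u[i₀] := by
        intro h
        exact hc2 ⟨j₁, by omega, h, hej₁, hj₁i₀⟩
      set v' := (v.set i₀ (v[j₁])).set j₁ (v[i₀]'hi₀v) with hv'
      have hstep : SymStep T v v' := step_swap v i₀ j₁ hi₀v hj₁ (Ne.symm hj₁i₀) hej₁
      have hprof : SameProf T v v' := sameProf_swap v i₀ j₁ hi₀v hj₁ (Ne.symm hj₁i₀) hej₁
      have hlen' : v'.length = v.length := by simp [hv']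
      have hv'i₀ : v'[i₀]'(by omega) = v[j₁] := by
        simp [hv', List.getElem_set, hj₁i₀, Ne.symm hj₁i₀]
      have hv'm : ∀ m (hm : m < v.length), m ≠ i₀ → m ≠ j₁ → v'[m]'(by omega) = v[m] := by
        intro m hm h1 h2
        simp [hv', List.getElem_set, Ne.symm h1, Ne.symm h2]
      have hsub : Mis u v' ⊆ (Mis u v).erase i₀ := by
        intro m hm
        obtain ⟨hm1, hm2⟩ := (mem_Mis (by omega : u.length = v'.length)).mp hm
        have hmv : m < v.length := by omega
        by_cases h1 : m = i₀
        · subst h1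
          refine absurd ?_ hm2
          rw [hv'i₀, hvj₁]
        · rw [Finset.mem_erase]
          refine ⟨h1, (mem_Mis hl).mpr ⟨hm1, ?_⟩⟩
          by_cases h2 : m = j₁
          · subst h2
            rw [hvj₁]
            exact huj₁
          · rw [show v[m]'hmv = v'[m]'(by omega) from (hv'm m hmv h1 h2).symm]
            exact hm2
      have hcard2 : (Mis u v').card ≤ d := by
        calc (Mis u v').card ≤ ((Mis u v).erase i₀).card := Finset.card_le_card hsub
          _ = (Mis u v).card - 1 := Finset.card_erase_of_mem hi₀M
          _ ≤ d := by omega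
      have hch : Chain T u v' := ih u v' (by omega) (sameProf_trans hp hprof) hcard2
      exact chain_trans hch (Relation.ReflTransGen.single (symStep_symm hstep))
end CONV2

section CONV3
variable {A : Type*}

lemma getElem_congr_idx (l : List A) {i j : ℕ} (h : i = j) (hi : i < l.length) :
    l[i]'hi = l[j]'(h ▸ hi) := by subst h; rfl

lemma remove_last {T : Finset (Set ℕ)} (w : List A) (hw : 0 < w.length) (q : ℕ)
    (hq : q < w.length - 1) (heq : eqv T (w.length - 1) q)
    (hletter : w[q]'(by omega) = w[w.length - 1]'(by omega)) :
    Chain T w w.dropLast ∧ SameProf T w.dropLast w := by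
  have hne : w ≠ [] := by
    intro h; rw [h] at hw; simp at hw
  have hlast : w.dropLast ++ [w[w.length - 1]'(by omega)] = w := by
    rw [← List.getLast_eq_getElem hne]
    exact List.dropLast_append_getLast hne
  have hlen : w.dropLast.length = w.length - 1 := by simp
  have hq2 : q < w.dropLast.length := by omega
  have hq3 : w.dropLast[q]'hq2 = w[w.length - 1]'(by omega) := by
    rw [List.getElem_dropLast]
    exact hletter
  have hhas : hasL T w.dropLast (w[w.length - 1]'(by omega)) w.dropLast.length :=
    ⟨q, hq2, hq3, by rw [hlen]; exact heq⟩
  have hprof : SameProf T w.dropLast (w.dropLast ++ [w[w.length - 1]'(by omega)]) :=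
    sameProf_append _ hhas
  have hstep : SymStep T w.dropLast (w.dropLast ++ [w[w.length - 1]'(by omega)]) :=
    step_app w.dropLast q hq2 (by rw [hlen]; exact eqv_symm heq) hq3
  rw [hlast] at hprof hstep
  exact ⟨Relation.ReflTransGen.single (symStep_symm hstep), hprof⟩

lemma shrink {T : Finset (Set ℕ)} {u v : List A} (hp : SameProf T u v)
    (hlt : u.length < v.length) :
    ∃ v' : List A, Chain T v v' ∧ v'.length + 1 = v.length ∧ SameProf T u v' := by
  set n := v.length with hn
  set p := n - 1 with hpdef
  have hp_lt : p < n := by omega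
  have hulen : u.length ≤ p := by omega
  set Sv := (Finset.range n).filter (fun j => eqv T p j) with hSv
  set Su := (Finset.range u.length).filter (fun j => eqv T p j) with hSu
  have hpSv : p ∈ Sv := by
    rw [hSv, Finset.mem_filter, Finset.mem_range]
    exact ⟨hp_lt, eqv_refl T p⟩
  have hSuSv : Su ⊆ Sv.erase p := by
    intro j hj
    rw [hSu, Finset.mem_filter, Finset.mem_range] at hj
    rw [Finset.mem_erase, hSv, Finset.mem_filter, Finset.mem_range]
    exact ⟨by omega, by omega, hj.2⟩
  -- pigeonhole on letters
  have hmaps : ∀ j ∈ Sv, v[j]? ∈ Su.image (fun j => u[j]?) := by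
    intro j hj
    rw [hSv, Finset.mem_filter, Finset.mem_range] at hj
    obtain ⟨hjn, hje⟩ := hj
    have hhas : hasL T u (v[j]'hjn) p := (hp _ p).mpr ⟨j, hjn, rfl, hje⟩
    obtain ⟨j', hj', hu', he'⟩ := hhas
    rw [Finset.mem_image]
    refine ⟨j', ?_, ?_⟩
    · rw [hSu, Finset.mem_filter, Finset.mem_range]
      exact ⟨hj', he'⟩
    · rw [List.getElem?_eq_getElem hj', List.getElem?_eq_getElem hjn, hu']
  have hcard : (Su.image (fun j => u[j]?)).card < Sv.card := by
    calc (Su.image (fun j => u[j]?)).card ≤ Su.card := Finset.card_image_le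
      _ ≤ (Sv.erase p).card := Finset.card_le_card hSuSv
      _ = Sv.card - 1 := Finset.card_erase_of_mem hpSv
      _ < Sv.card := by
          have : 0 < Sv.card := Finset.card_pos.mpr ⟨p, hpSv⟩
          omega
  obtain ⟨x, hx, y, hy, hxy, hfxy⟩ :=
    Finset.exists_ne_map_eq_of_card_lt_of_maps_to hcard hmaps
  rw [hSv, Finset.mem_filter, Finset.mem_range] at hx hy
  obtain ⟨hxn, hxe⟩ := hx
  obtain ⟨hyn, hye⟩ := hy
  have hvv : v[x]'hxn = v[y]'hyn := by
    rw [List.getElem?_eq_getElem hxn, List.getElem?_eq_getElem hyn] at hfxy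
    exact Option.some_injective _ hfxy
  -- get a repeated letter with a spare occurrence away from `p`
  by_cases hxp : x = p
  · -- v[p] = v[y], y ≠ p : remove directly
    subst hxp
    obtain ⟨hch, hprof⟩ := remove_last (T := T) v (by omega) y (by omega)
      (by show eqv T (v.length - 1) y; have h : v.length - 1 = p := rfl; rw [h]; exact hye)
      (by rw [getElem_congr_idx v (show v.length - 1 = p from rfl)]; exact hvv.symm)
    exact ⟨v.dropLast, hch, by simp; omega, sameProf_trans hp (sameProf_symm hprof)⟩
  · by_cases hyp : y = p
    · subst hyp
      obtain ⟨hch, hprof⟩ := remove_last (T := T) v (by omega) x (by omega)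
        (by show eqv T (v.length - 1) x; have h : v.length - 1 = p := rfl; rw [h]; exact hxe)
        (by rw [getElem_congr_idx v (show v.length - 1 = p from rfl)]; exact hvv)
      exact ⟨v.dropLast, hch, by simp; omega, sameProf_trans hp (sameProf_symm hprof)⟩
    · -- both differ from p : first swap `p` with `x`
      set v₁ := (v.set p (v[x]'hxn)).set x (v[p]'hp_lt) with hv₁
      have hstep1 : SymStep T v v₁ := step_swap v p x hp_lt hxn (Ne.symm hxp) hxe
      have hprof1 : SameProf T v v₁ := sameProf_swap v p x hp_lt hxn (Ne.symm hxp) hxe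
      have hlen1 : v₁.length = n := by simp [hv₁, hn]
      have hv₁p : v₁[p]'(by omega) = v[x]'hxn := by
        simp [hv₁, List.getElem_set, hxp, Ne.symm hxp]
      have hv₁y : v₁[y]'(by omega) = v[y]'hyn := by
        have h1 : y ≠ p := hyp
        have h2 : y ≠ x := fun h => hxy (h.symm)
        simp [hv₁, List.getElem_set, Ne.symm h1, Ne.symm h2]
      obtain ⟨hch2, hprof2⟩ := remove_last (T := T) v₁ (by omega) y (by omega)
        (by show eqv T (v₁.length - 1) y; have h : v₁.length - 1 = p := by omega
            rw [h]; exact hye)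
        (by rw [getElem_congr_idx v₁ (show v₁.length - 1 = p by omega), hv₁y, hv₁p, hvv])
      refine ⟨v₁.dropLast, ?_, by simp; omega, ?_⟩
      · exact chain_trans (Relation.ReflTransGen.single hstep1) hch2
      · exact sameProf_trans (sameProf_trans hp hprof1) (sameProf_symm hprof2)

/-- The main combinatorial lemma: words with the same profile are connected. -/
lemma mcl_le {T : Finset (Set ℕ)} :
    ∀ d : ℕ, ∀ u v : List A, u.length ≤ v.length → v.length - u.length ≤ d →
      SameProf T u v → Chain T u v := by
  intro d
  induction d with
  | zero =>
    intro u v hle hd hp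
    exact conn_aux (Mis u v).card u v (by omega) hp le_rfl
  | succ d ih =>
    intro u v hle hd hp
    by_cases heq : u.length = v.length
    · exact conn_aux (Mis u v).card u v heq hp le_rfl
    · have hlt : u.length < v.length := by omega
      obtain ⟨v', hch, hlen, hp'⟩ := shrink hp hlt
      have hch2 : Chain T u v' := ih u v' (by omega) (by omega) hp'
      exact chain_trans hch2 (chain_symm hch)

lemma mcl {T : Finset (Set ℕ)} {u v : List A} (hp : SameProf T u v) : Chain T u v := by
  rcases le_total u.length v.length with h | h
  · exact mcl_le (v.length - u.length) u v h le_rfl hp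
  · exact chain_symm (mcl_le (u.length - v.length) v u h le_rfl (sameProf_symm hp))
end CONV3

section CONV4
variable {A : Type*}

lemma genBool_empty {α : Type*} {S : Set (Set α)} : GenBool S (∅ : Set α) := by
  have := GenBool.compl (GenBool.univ (S := S))
  simpa using this

lemma genBool_union {α : Type*} {S : Set (Set α)} {s t : Set α} (hs : GenBool S s)
    (ht : GenBool S t) : GenBool S (s ∪ t) := by
  have := GenBool.compl (GenBool.inter (GenBool.compl hs) (GenBool.compl ht))
  simpa [Set.compl_inter, compl_compl] using this

/-- A language saturated for the profile equivalence given by a finite set of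
generators belongs to the generated Boolean algebra. -/
lemma genBool_of_saturated {P : Set (A × Set ℕ)} (hP : P.Finite) :
    ∀ L : Set (List A),
      (∀ u v : List A, u ∈ L →
        (∀ p ∈ P, (u ∈ diamLang p.1 p.2 ↔ v ∈ diamLang p.1 p.2)) → v ∈ L) →
      B1 A L := by
  refine Set.Finite.induction_on
    (motive := fun P _ => ∀ L : Set (List A),
      (∀ u v : List A, u ∈ L →
        (∀ p ∈ P, (u ∈ diamLang p.1 p.2 ↔ v ∈ diamLang p.1 p.2)) → v ∈ L) →
      B1 A L) P hP ?_ ?_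
  · intro L hL
    by_cases hLe : L = ∅
    · exact hLe ▸ genBool_empty
    · obtain ⟨u₀, hu₀⟩ := Set.nonempty_iff_ne_empty.mpr hLe
      have : L = Set.univ := by
        ext v
        simp only [Set.mem_univ, iff_true]
        exact hL u₀ v hu₀ (fun p hp => absurd hp (Set.notMem_empty p))
      exact this ▸ GenBool.univ
  · intro p P' hpP' hP'fin ih L hL
    set D := diamLang (A := A) p.1 p.2 with hD
    set X : Set (List A) :=
      {x | ∃ w, w ∈ L ∧ w ∈ D ∧
        (∀ q ∈ P', (w ∈ diamLang q.1 q.2 ↔ x ∈ diamLang q.1 q.2))} with hX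
    set Y : Set (List A) :=
      {x | ∃ w, w ∈ L ∧ w ∉ D ∧
        (∀ q ∈ P', (w ∈ diamLang q.1 q.2 ↔ x ∈ diamLang q.1 q.2))} with hY
    have hXB : B1 A X := by
      refine ih X ?_
      rintro u v ⟨w, hwL, hwD, hwu⟩ huv
      exact ⟨w, hwL, hwD, fun q hq => (hwu q hq).trans (huv q hq)⟩
    have hYB : B1 A Y := by
      refine ih Y ?_
      rintro u v ⟨w, hwL, hwD, hwu⟩ huv
      exact ⟨w, hwL, hwD, fun q hq => (hwu q hq).trans (huv q hq)⟩
    have hDB : B1 A D := GenBool.basic ⟨p.1, p.2, rfl⟩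
    have hLeq : L = (D ∩ X) ∪ (Dᶜ ∩ Y) := by
      ext u
      constructor
      · intro huL
        by_cases huD : u ∈ D
        · exact Or.inl ⟨huD, ⟨u, huL, huD, fun q hq => Iff.rfl⟩⟩
        · exact Or.inr ⟨huD, ⟨u, huL, huD, fun q hq => Iff.rfl⟩⟩
      · rintro (⟨huD, w, hwL, hwD, hwu⟩ | ⟨huD, w, hwL, hwD, hwu⟩)
        · refine hL w u hwL (fun q hq => ?_)
          rcases Set.mem_insert_iff.mp hq with rfl | hq'
          · exact ⟨fun _ => huD, fun _ => hwD⟩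
          · exact hwu q hq'
        · refine hL w u hwL (fun q hq => ?_)
          rcases Set.mem_insert_iff.mp hq with rfl | hq'
          · exact ⟨fun h => absurd h hwD, fun h => absurd h huD⟩
          · exact hwu q hq'
    rw [hLeq]
    exact genBool_union (GenBool.inter hDB hXB) (GenBool.inter (GenBool.compl hDB) hYB)

lemma hasL_iff_diam {T : Finset (Set ℕ)} {w : List A} {a : A} {i : ℕ} :
    hasL T w a i ↔ w ∈ diamLang a {j | eqv T i j} := by
  constructor
  · rintro ⟨j, hj, hwj, hej⟩
    exact ⟨j, mem_contentSet.mpr ⟨hj, hwj⟩, hej⟩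
  · rintro ⟨j, hj1, hj2⟩
    obtain ⟨h, hwj⟩ := mem_contentSet.mp hj1
    exact ⟨j, h, hwj, hj2⟩

lemma exists_pair_of_not_B1 [Finite A] {L : Set (List A)} (h : ¬ B1 A L)
    (T : Finset (Set ℕ)) :
    ∃ u v : List A, u ∈ L ∧ v ∉ L ∧ SameProf T u v := by
  by_contra hno
  push_neg at hno
  set atomOf : ℕ → Set ℕ := fun i => {j | eqv T i j} with hatom
  have hfin : (Set.range atomOf).Finite := by
    have h1 : Set.range atomOf ⊆
        (fun φ : {Q // Q ∈ T} → Prop => {j | ∀ Q : {Q // Q ∈ T}, j ∈ Q.1 ↔ φ Q}) ''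
          Set.univ := by
      rintro s ⟨i, rfl⟩
      refine ⟨fun Q => i ∈ Q.1, trivial, ?_⟩
      ext j
      simp only [hatom, Set.mem_setOf_eq, eqv]
      exact ⟨fun hj Q hQ => (hj ⟨Q, hQ⟩).symm, fun hj Q => (hj Q.1 Q.2).symm⟩
    exact (Set.finite_univ.image _).subset h1
  have hPfin : (Set.univ ×ˢ Set.range atomOf : Set (A × Set ℕ)).Finite :=
    Set.finite_univ.prod hfin
  refine h (genBool_of_saturated hPfin L ?_)
  intro u v huL hprof
  by_contra hvL
  refine hno u v huL hvL ?_
  intro a i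
  rw [hasL_iff_diam, hasL_iff_diam]
  exact hprof (a, atomOf i) (Set.mem_prod.mpr ⟨trivial, Set.mem_range_self i⟩)

end CONV4

section FINAL
variable {A : Type*}

lemma chain_boundary {T : Finset (Set ℕ)} {L : Set (List A)} {u v : List A}
    (h : Chain T u v) : u ∈ L → v ∉ L → ∃ x y, SymStep T x y ∧ x ∈ L ∧ y ∉ L := by
  induction h with
  | refl => intro hu hv; exact absurd hu hv
  | @tail b c hub hbc ih =>
    intro hu hv
    by_cases hb : b ∈ L
    · exact ⟨b, c, hbc, hb, hv⟩
    · exact ih hu hb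

/-- Violation data for one of the three kinds of equations. -/
def VData (L : Set (List A)) (T : Finset (Set ℕ)) : ((A × A) ⊕ (A × A) ⊕ A) → Prop
  | Sum.inl (a, b) => ∃ p : Dom2 A,
      eqv T p.1.2.1 p.1.2.2 ∧ ¬((f2 a b p ∈ L) ↔ (f2 b a p ∈ L))
  | Sum.inr (Sum.inl (a, b)) => ∃ p : Dom3 A,
      eqv T p.1.2.1 p.1.2.2.1 ∧ eqv T p.1.2.2.1 p.1.2.2.2 ∧
        ¬((f3 a a b p ∈ L) ↔ (f3 a b b p ∈ L))
  | Sum.inr (Sum.inr a) => ∃ p : Dom1 A,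
      eqv T p.1.2 p.1.1.length ∧ ¬((f1 a p ∈ L) ↔ (f1app a p ∈ L))

lemma exists_vdata {L : Set (List A)} {T : Finset (Set ℕ)}
    (h : ∃ x y, SymStep T x y ∧ x ∈ L ∧ y ∉ L) : ∃ kk, VData L T kk := by
  obtain ⟨x, y, hstep, hx, hy⟩ := h
  have hniff : ∀ {P Q : Prop}, P → ¬Q → ¬(P ↔ Q) := fun hp hq hiff => hq (hiff.mp hp)
  rcases hstep with hst | hst
  · cases hst with
    | swap a b p he => exact ⟨Sum.inl (a, b), p, he, hniff hx hy⟩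
    | triple a b p h12 h23 => exact ⟨Sum.inr (Sum.inl (a, b)), p, h12, h23, hniff hx hy⟩
    | app a p he => exact ⟨Sum.inr (Sum.inr a), p, he, hniff hx hy⟩
  · cases hst with
    | swap a b p he =>
        exact ⟨Sum.inl (a, b), p, he, fun hiff => (hniff hx hy) hiff.symm⟩
    | triple a b p h12 h23 =>
        exact ⟨Sum.inr (Sum.inl (a, b)), p, h12, h23, fun hiff => (hniff hx hy) hiff.symm⟩
    | app a p he =>
        exact ⟨Sum.inr (Sum.inr a), p, he, fun hiff => (hniff hx hy) hiff.symm⟩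

lemma exists_fiber {I K : Type*} [Finite K] (𝒰 : Ultrafilter I) (f : I → K) :
    ∃ kk, {x | f x = kk} ∈ 𝒰 := by
  by_contra hcon
  push_neg at hcon
  have h2 : ∀ kk, {x | f x = kk}ᶜ ∈ 𝒰 :=
    fun kk => Ultrafilter.compl_mem_iff_notMem.mpr (hcon kk)
  have h3 : (⋂ kk, {x | f x = kk}ᶜ) ∈ 𝒰 := Filter.iInter_mem.mpr h2
  have h4 : (⋂ kk, {x | f x = kk}ᶜ) = ∅ :=
    Set.eq_empty_iff_forall_notMem.mpr
      (fun x hx => by simpa using (Set.mem_iInter.mp hx (f x)))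
  rw [h4] at h3
  exact Ultrafilter.empty_notMem h3

theorem equations_imply_B1 [Fintype A] [Nonempty A] {L : Set (List A)}
    (hs : ∀ a b : A, SatAB L a b ∧ SatAAB L a b ∧ SatAA L a) : B1 A L := by
  by_contra hnb
  classical
  have hviol : ∀ T : Finset (Set ℕ), ∃ kk, VData L T kk := by
    intro T
    obtain ⟨u, v, hu, hv, hprof⟩ := exists_pair_of_not_B1 hnb T
    exact exists_vdata (chain_boundary (mcl hprof) hu hv)
  choose k hk using hviol
  haveI : Nonempty (Finset (Set ℕ)) := ⟨∅⟩
  set 𝒰 : Ultrafilter (Finset (Set ℕ)) := Ultrafilter.of Filter.atTop with hU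
  have hUp : ∀ Q : Set ℕ, {T : Finset (Set ℕ) | Q ∈ T} ∈ 𝒰 := by
    intro Q
    refine Ultrafilter.of_le Filter.atTop ?_
    refine Filter.mem_of_superset (Filter.Ici_mem_atTop ({Q} : Finset (Set ℕ))) ?_
    intro T hT
    exact Finset.singleton_subset_iff.mp hT
  obtain ⟨k₀, hk₀⟩ := exists_fiber 𝒰 k
  rcases k₀ with ⟨a, b⟩ | ⟨a, b⟩ | a
  · -- swap violation
    have hEx : ∀ T ∈ {T | k T = Sum.inl (a, b)}, ∃ p : Dom2 A,
        eqv T p.1.2.1 p.1.2.2 ∧ ¬((f2 a b p ∈ L) ↔ (f2 b a p ∈ L)) := by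
      intro T hT
      have h1 := hk T
      have h2 : k T = Sum.inl (a, b) := hT
      rw [h2] at h1
      exact h1
    set junk : Dom2 A := ⟨([Classical.arbitrary A], 0, 0), by simp⟩ with hjunk
    set g : Finset (Set ℕ) → Dom2 A := fun T =>
      if h : ∃ p : Dom2 A, eqv T p.1.2.1 p.1.2.2 ∧ ¬((f2 a b p ∈ L) ↔ (f2 b a p ∈ L))
      then h.choose else junk with hg
    have hgE : ∀ T ∈ {T | k T = Sum.inl (a, b)},
        eqv T (g T).1.2.1 (g T).1.2.2 ∧ ¬((f2 a b (g T) ∈ L) ↔ (f2 b a (g T) ∈ L)) := by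
      intro T hT
      have hx := hEx T hT
      rw [hg]
      simp only [dif_pos hx]
      exact hx.choose_spec
    have hside : Ultrafilter.map (fun x : Dom2 A => x.1.2.1) (Ultrafilter.map g 𝒰) =
        Ultrafilter.map (fun x : Dom2 A => x.1.2.2) (Ultrafilter.map g 𝒰) := by
      apply Ultrafilter.coe_injective
      apply Filter.ext
      intro s
      rw [Ultrafilter.mem_coe, Ultrafilter.mem_coe, Ultrafilter.mem_map,
        Ultrafilter.mem_map, Ultrafilter.mem_map, Ultrafilter.mem_map]
      refine uf_iff_of_eqOn 𝒰 (Filter.inter_mem hk₀ (hUp s)) ?_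
      rintro T ⟨hT1, hT2⟩
      have := (hgE T hT1).1 s hT2
      simpa using this
    have hiff := (hs a b).1 (Ultrafilter.map g 𝒰) hside
    rw [Ultrafilter.mem_map, Ultrafilter.mem_map] at hiff
    have hthis := uf_iff_of_eqOn 𝒰 hk₀ (fun T hT => ?_)
      (s := g ⁻¹' (f2 a b ⁻¹' L)) (t := (g ⁻¹' (f2 b a ⁻¹' L))ᶜ)
    · rw [Ultrafilter.compl_mem_iff_notMem] at hthis
      tauto
    · have h2 := (hgE T hT).2
      simp only [Set.mem_preimage, Set.mem_compl_iff]
      tauto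
  · -- triple violation
    have hEx : ∀ T ∈ {T | k T = Sum.inr (Sum.inl (a, b))}, ∃ p : Dom3 A,
        eqv T p.1.2.1 p.1.2.2.1 ∧ eqv T p.1.2.2.1 p.1.2.2.2 ∧
          ¬((f3 a a b p ∈ L) ↔ (f3 a b b p ∈ L)) := by
      intro T hT
      have h1 := hk T
      have h2 : k T = Sum.inr (Sum.inl (a, b)) := hT
      rw [h2] at h1
      exact h1
    set junk : Dom3 A := ⟨([Classical.arbitrary A], 0, 0, 0), by simp⟩ with hjunk
    set g : Finset (Set ℕ) → Dom3 A := fun T =>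
      if h : ∃ p : Dom3 A, eqv T p.1.2.1 p.1.2.2.1 ∧ eqv T p.1.2.2.1 p.1.2.2.2 ∧
          ¬((f3 a a b p ∈ L) ↔ (f3 a b b p ∈ L))
      then h.choose else junk with hg
    have hgE : ∀ T ∈ {T | k T = Sum.inr (Sum.inl (a, b))},
        eqv T (g T).1.2.1 (g T).1.2.2.1 ∧ eqv T (g T).1.2.2.1 (g T).1.2.2.2 ∧
          ¬((f3 a a b (g T) ∈ L) ↔ (f3 a b b (g T) ∈ L)) := by
      intro T hT
      have hx := hEx T hT
      rw [hg]
      simp only [dif_pos hx]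
      exact hx.choose_spec
    have hside1 : Ultrafilter.map (fun x : Dom3 A => x.1.2.1) (Ultrafilter.map g 𝒰) =
        Ultrafilter.map (fun x : Dom3 A => x.1.2.2.1) (Ultrafilter.map g 𝒰) := by
      apply Ultrafilter.coe_injective
      apply Filter.ext
      intro s
      rw [Ultrafilter.mem_coe, Ultrafilter.mem_coe, Ultrafilter.mem_map,
        Ultrafilter.mem_map, Ultrafilter.mem_map, Ultrafilter.mem_map]
      refine uf_iff_of_eqOn 𝒰 (Filter.inter_mem hk₀ (hUp s)) ?_
      rintro T ⟨hT1, hT2⟩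
      have := (hgE T hT1).1 s hT2
      simpa using this
    have hside2 : Ultrafilter.map (fun x : Dom3 A => x.1.2.2.1) (Ultrafilter.map g 𝒰) =
        Ultrafilter.map (fun x : Dom3 A => x.1.2.2.2) (Ultrafilter.map g 𝒰) := by
      apply Ultrafilter.coe_injective
      apply Filter.ext
      intro s
      rw [Ultrafilter.mem_coe, Ultrafilter.mem_coe, Ultrafilter.mem_map,
        Ultrafilter.mem_map, Ultrafilter.mem_map, Ultrafilter.mem_map]
      refine uf_iff_of_eqOn 𝒰 (Filter.inter_mem hk₀ (hUp s)) ?_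
      rintro T ⟨hT1, hT2⟩
      have := (hgE T hT1).2.1 s hT2
      simpa using this
    have hiff := (hs a b).2.1 (Ultrafilter.map g 𝒰) ⟨hside1, hside2⟩
    rw [Ultrafilter.mem_map, Ultrafilter.mem_map] at hiff
    have hthis := uf_iff_of_eqOn 𝒰 hk₀ (fun T hT => ?_)
      (s := g ⁻¹' (f3 a a b ⁻¹' L)) (t := (g ⁻¹' (f3 a b b ⁻¹' L))ᶜ)
    · rw [Ultrafilter.compl_mem_iff_notMem] at hthis
      tauto
    · have h2 := (hgE T hT).2.2
      simp only [Set.mem_preimage, Set.mem_compl_iff]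
      tauto
  · -- append violation
    have hEx : ∀ T ∈ {T | k T = Sum.inr (Sum.inr a)}, ∃ p : Dom1 A,
        eqv T p.1.2 p.1.1.length ∧ ¬((f1 a p ∈ L) ↔ (f1app a p ∈ L)) := by
      intro T hT
      have h1 := hk T
      have h2 : k T = Sum.inr (Sum.inr a) := hT
      rw [h2] at h1
      exact h1
    set junk : Dom1 A := ⟨([Classical.arbitrary A], 0), by simp⟩ with hjunk
    set g : Finset (Set ℕ) → Dom1 A := fun T =>
      if h : ∃ p : Dom1 A, eqv T p.1.2 p.1.1.length ∧ ¬((f1 a p ∈ L) ↔ (f1app a p ∈ L))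
      then h.choose else junk with hg
    have hgE : ∀ T ∈ {T | k T = Sum.inr (Sum.inr a)},
        eqv T (g T).1.2 (g T).1.1.length ∧
          ¬((f1 a (g T) ∈ L) ↔ (f1app a (g T) ∈ L)) := by
      intro T hT
      have hx := hEx T hT
      rw [hg]
      simp only [dif_pos hx]
      exact hx.choose_spec
    have hside : Ultrafilter.map (fun x : Dom1 A => x.1.2) (Ultrafilter.map g 𝒰) =
        Ultrafilter.map (fun x : Dom1 A => x.1.1.length) (Ultrafilter.map g 𝒰) := by
      apply Ultrafilter.coe_injective
      apply Filter.ext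
      intro s
      rw [Ultrafilter.mem_coe, Ultrafilter.mem_coe, Ultrafilter.mem_map,
        Ultrafilter.mem_map, Ultrafilter.mem_map, Ultrafilter.mem_map]
      refine uf_iff_of_eqOn 𝒰 (Filter.inter_mem hk₀ (hUp s)) ?_
      rintro T ⟨hT1, hT2⟩
      have := (hgE T hT1).1 s hT2
      simpa using this
    have hiff := (hs a a).2.2 (Ultrafilter.map g 𝒰) hside
    rw [Ultrafilter.mem_map, Ultrafilter.mem_map] at hiff
    have hthis := uf_iff_of_eqOn 𝒰 hk₀ (fun T hT => ?_)
      (s := g ⁻¹' (f1 a ⁻¹' L)) (t := (g ⁻¹' (f1app a ⁻¹' L))ᶜ)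
    · rw [Ultrafilter.compl_mem_iff_notMem] at hthis
      tauto
    · have h2 := (hgE T hT).2
      simp only [Set.mem_preimage, Set.mem_compl_iff]
      tauto

end FINAL


/-- A language `L ⊆ A*` belongs to `B₁` if and only if `L` satisfies the families of
ultrafilter equations `E_{ab=ba}`, `E_{aab=abb}` and `E_{a=a·a}` for all `a, b ∈ A`. -/
theorem statement0 (A : Type*) [Fintype A] [Nonempty A] (L : Set (List A)) :
    B1 A L ↔ ∀ a b : A, SatAB L a b ∧ SatAAB L a b ∧ SatAA L a := by
  constructor
  · exact forward
  · exact equations_imply_B1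

end Stmt0
end

section
/- Let A be a finite alphabet. If a language L ⊆ A* belongs to B₁, then L satisfies the families of ultrafilter equations E_{ab=ba}, E_{aab=abb} and E_{a=a·a} for all letters a, b ∈ A. -/
open Set

namespace Stmt1

/-- Membership in the Boolean subalgebra of `Set α` generated by a family `S`. -/
inductive GenBool {α : Type*} (S : Set (Set α)) : Set α → Prop
  | basic {s : Set α} : s ∈ S → GenBool S s
  | univ : GenBool S Set.univ
  | compl {s : Set α} : GenBool S s → GenBool S sᶜ
  | inter {s t : Set α} : GenBool S s → GenBool S t → GenBool S (s ∩ t)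

variable {A : Type*}

/-- `c_a(w)`: the set of positions of the word `w` carrying the letter `a`. -/
def contentSet (a : A) (w : List A) : Set ℕ :=
  {i | ∃ h : i < w.length, w.get ⟨i, h⟩ = a}

/-- `L_{◇^a_Q}`. -/
def diamLang (a : A) (Q : Set ℕ) : Set (List A) :=
  {w | (contentSet a w ∩ Q).Nonempty}

/-- The Boolean algebra `B₁`, as a membership predicate. -/
def B1 (A : Type*) : Set (List A) → Prop :=
  GenBool {L | ∃ (a : A) (Q : Set ℕ), L = diamLang a Q}

/-- `A* ⊗ ℕ`. -/
abbrev Dom1 (A : Type*) : Type _ := {x : List A × ℕ // x.2 < x.1.length}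

/-- `A* ⊗ ℕ²`. -/
abbrev Dom2 (A : Type*) : Type _ :=
  {x : List A × ℕ × ℕ // x.2.1 < x.1.length ∧ x.2.2 < x.1.length}

/-- `A* ⊗ ℕ³`. -/
abbrev Dom3 (A : Type*) : Type _ :=
  {x : List A × ℕ × ℕ × ℕ //
    x.2.1 < x.1.length ∧ x.2.2.1 < x.1.length ∧ x.2.2.2 < x.1.length}

/-- `f_{a,b}(w,j₁,j₂) = w(j₁→a)(j₂→b)` if `j₁ ≠ j₂`, and `w` otherwise. -/
def f2 (a b : A) : Dom2 A → List A := fun x =>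
  if x.1.2.1 ≠ x.1.2.2 then (x.1.1.set x.1.2.1 a).set x.1.2.2 b else x.1.1

/-- `f_{a,b,c}(w,j₁,j₂,j₃) = w(j₁→a)(j₂→b)(j₃→c)` if `j₁,j₂,j₃` are pairwise
distinct, and `w` otherwise. -/
def f3 (a b c : A) : Dom3 A → List A := fun x =>
  if x.1.2.1 ≠ x.1.2.2.1 ∧ x.1.2.1 ≠ x.1.2.2.2 ∧ x.1.2.2.1 ≠ x.1.2.2.2 then
    ((x.1.1.set x.1.2.1 a).set x.1.2.2.1 b).set x.1.2.2.2 c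
  else x.1.1

/-- `f_a(w,i) = w(i→a)`. -/
def f1 (a : A) : Dom1 A → List A := fun x => x.1.1.set x.1.2 a

/-- `f_a·a(w,i) = w(i→a).a`. -/
def f1app (a : A) : Dom1 A → List A := fun x => x.1.1.set x.1.2 a ++ [a]

/-- `L` satisfies the family of ultrafilter equations `E_{ab=ba}`. -/
def SatAB (L : Set (List A)) (a b : A) : Prop :=
  ∀ ν : Ultrafilter (Dom2 A),
    Ultrafilter.map (fun x => x.1.2.1) ν = Ultrafilter.map (fun x => x.1.2.2) ν →
      (f2 a b ⁻¹' L ∈ ν ↔ f2 b a ⁻¹' L ∈ ν)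

/-- `L` satisfies the family of ultrafilter equations `E_{aab=abb}`. -/
def SatAAB (L : Set (List A)) (a b : A) : Prop :=
  ∀ ν : Ultrafilter (Dom3 A),
    (Ultrafilter.map (fun x => x.1.2.1) ν = Ultrafilter.map (fun x => x.1.2.2.1) ν ∧
      Ultrafilter.map (fun x => x.1.2.2.1) ν = Ultrafilter.map (fun x => x.1.2.2.2) ν) →
      (f3 a a b ⁻¹' L ∈ ν ↔ f3 a b b ⁻¹' L ∈ ν)

/-- `L` satisfies the family of ultrafilter equations `E_{a=a·a}`. -/
def SatAA (L : Set (List A)) (a : A) : Prop :=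
  ∀ ν : Ultrafilter (Dom1 A),
    Ultrafilter.map (fun x => x.1.2) ν = Ultrafilter.map (fun x => x.1.1.length) ν →
      (f1 a ⁻¹' L ∈ ν ↔ f1app a ⁻¹' L ∈ ν)

lemma mem_diamLang {c : A} {Q : Set ℕ} {w : List A} :
    w ∈ diamLang c Q ↔ ∃ i, ∃ h : i < w.length, w[i] = c ∧ i ∈ Q := by
  simp only [diamLang, contentSet, Set.mem_setOf_eq, Set.inter_nonempty, List.get_eq_getElem]
  constructor
  · rintro ⟨i, ⟨h, hc⟩, hq⟩; exact ⟨i, h, hc, hq⟩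
  · rintro ⟨i, h, hc, hq⟩; exact ⟨i, ⟨h, hc⟩, hq⟩

lemma mem_diam_set1 {w : List A} {j : ℕ} (hj : j < w.length) (a c : A) (Q : Set ℕ) :
    w.set j a ∈ diamLang c Q ↔
      (∃ i, ∃ h : i < w.length, i ≠ j ∧ w[i] = c ∧ i ∈ Q) ∨ (a = c ∧ j ∈ Q) := by
  rw [mem_diamLang]
  constructor
  · rintro ⟨i, h, hc, hq⟩
    simp only [List.length_set] at h
    rw [List.getElem_set] at hc
    by_cases e : j = i
    · subst e; rw [if_pos rfl] at hc; exact Or.inr ⟨hc, hq⟩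
    · rw [if_neg e] at hc; exact Or.inl ⟨i, h, fun h' => e h'.symm, hc, hq⟩
  · rintro (⟨i, h, hij, hc, hq⟩ | ⟨hc, hq⟩)
    · refine ⟨i, by simpa using h, ?_, hq⟩
      rw [List.getElem_set, if_neg (fun h' => hij h'.symm)]; exact hc
    · refine ⟨j, by simpa using hj, ?_, hq⟩
      rw [List.getElem_set, if_pos rfl]; exact hc

lemma mem_diam_set2 {w : List A} {j1 j2 : ℕ} (h1 : j1 < w.length) (h2 : j2 < w.length)
    (hne : j1 ≠ j2) (a b c : A) (Q : Set ℕ) :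
    (w.set j1 a).set j2 b ∈ diamLang c Q ↔
      (∃ i, ∃ h : i < w.length, i ≠ j1 ∧ i ≠ j2 ∧ w[i] = c ∧ i ∈ Q) ∨
        (a = c ∧ j1 ∈ Q) ∨ (b = c ∧ j2 ∈ Q) := by
  rw [mem_diamLang]
  constructor
  · rintro ⟨i, h, hc, hq⟩
    simp only [List.length_set] at h
    rw [List.getElem_set, List.getElem_set] at hc
    by_cases e2 : j2 = i
    · subst e2; rw [if_pos rfl] at hc; exact Or.inr (Or.inr ⟨hc, hq⟩)
    · rw [if_neg e2] at hc
      by_cases e1 : j1 = i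
      · subst e1; rw [if_pos rfl] at hc; exact Or.inr (Or.inl ⟨hc, hq⟩)
      · rw [if_neg e1] at hc
        exact Or.inl ⟨i, h, fun h' => e1 h'.symm, fun h' => e2 h'.symm, hc, hq⟩
  · rintro (⟨i, h, hi1, hi2, hc, hq⟩ | ⟨hc, hq⟩ | ⟨hc, hq⟩)
    · refine ⟨i, by simpa using h, ?_, hq⟩
      rw [List.getElem_set, if_neg (fun h' => hi2 h'.symm), List.getElem_set,
        if_neg (fun h' => hi1 h'.symm)]
      exact hc
    · refine ⟨j1, by simpa using h1, ?_, hq⟩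
      rw [List.getElem_set, if_neg (Ne.symm hne), List.getElem_set, if_pos rfl]; exact hc
    · refine ⟨j2, by simpa using h2, ?_, hq⟩
      rw [List.getElem_set, if_pos rfl]; exact hc

lemma mem_diam_set3 {w : List A} {j1 j2 j3 : ℕ} (h1 : j1 < w.length) (h2 : j2 < w.length)
    (h3 : j3 < w.length) (h12 : j1 ≠ j2) (h13 : j1 ≠ j3) (h23 : j2 ≠ j3) (a b c d : A)
    (Q : Set ℕ) :
    ((w.set j1 a).set j2 b).set j3 c ∈ diamLang d Q ↔
      (∃ i, ∃ h : i < w.length, i ≠ j1 ∧ i ≠ j2 ∧ i ≠ j3 ∧ w[i] = d ∧ i ∈ Q) ∨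
        (a = d ∧ j1 ∈ Q) ∨ (b = d ∧ j2 ∈ Q) ∨ (c = d ∧ j3 ∈ Q) := by
  rw [mem_diamLang]
  constructor
  · rintro ⟨i, h, hc, hq⟩
    simp only [List.length_set] at h
    rw [List.getElem_set, List.getElem_set, List.getElem_set] at hc
    by_cases e3 : j3 = i
    · subst e3; rw [if_pos rfl] at hc; exact Or.inr (Or.inr (Or.inr ⟨hc, hq⟩))
    · rw [if_neg e3] at hc
      by_cases e2 : j2 = i
      · subst e2; rw [if_pos rfl] at hc; exact Or.inr (Or.inr (Or.inl ⟨hc, hq⟩))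
      · rw [if_neg e2] at hc
        by_cases e1 : j1 = i
        · subst e1; rw [if_pos rfl] at hc; exact Or.inr (Or.inl ⟨hc, hq⟩)
        · rw [if_neg e1] at hc
          exact Or.inl ⟨i, h, fun h' => e1 h'.symm, fun h' => e2 h'.symm,
            fun h' => e3 h'.symm, hc, hq⟩
  · rintro (⟨i, h, hi1, hi2, hi3, hc, hq⟩ | ⟨hc, hq⟩ | ⟨hc, hq⟩ | ⟨hc, hq⟩)
    · refine ⟨i, by simpa using h, ?_, hq⟩
      rw [List.getElem_set, if_neg (fun h' => hi3 h'.symm), List.getElem_set,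
        if_neg (fun h' => hi2 h'.symm), List.getElem_set, if_neg (fun h' => hi1 h'.symm)]
      exact hc
    · refine ⟨j1, by simpa using h1, ?_, hq⟩
      rw [List.getElem_set, if_neg (Ne.symm h13), List.getElem_set, if_neg (Ne.symm h12),
        List.getElem_set, if_pos rfl]
      exact hc
    · refine ⟨j2, by simpa using h2, ?_, hq⟩
      rw [List.getElem_set, if_neg (Ne.symm h23), List.getElem_set, if_pos rfl]; exact hc
    · refine ⟨j3, by simpa using h3, ?_, hq⟩
      rw [List.getElem_set, if_pos rfl]; exact hc

lemma mem_diam_append {w : List A} (a c : A) (Q : Set ℕ) :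
    w ++ [a] ∈ diamLang c Q ↔ w ∈ diamLang c Q ∨ (a = c ∧ w.length ∈ Q) := by
  rw [mem_diamLang, mem_diamLang]
  constructor
  · rintro ⟨i, h, hc, hq⟩
    simp only [List.length_append, List.length_singleton] at h
    by_cases hi : i < w.length
    · rw [List.getElem_append_left hi] at hc
      exact Or.inl ⟨i, hi, hc, hq⟩
    · have hil : i = w.length := by omega
      subst hil
      have : (w ++ [a])[w.length]'(by simp) = a := by simp
      rw [this] at hc
      exact Or.inr ⟨hc, hq⟩
  · rintro (⟨i, h, hc, hq⟩ | ⟨hc, hq⟩)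
    · refine ⟨i, by simp; omega, ?_, hq⟩
      rw [List.getElem_append_left h]; exact hc
    · refine ⟨w.length, by simp, ?_, hq⟩
      simpa using hc

lemma uf_congr {X : Type*} (ν : Ultrafilter X) {t s s' : Set X} (ht : t ∈ ν)
    (h : ∀ x ∈ t, (x ∈ s ↔ x ∈ s')) : s ∈ ν ↔ s' ∈ ν := by
  have key : s ∩ t = s' ∩ t := by
    ext x
    simp only [Set.mem_inter_iff]
    constructor
    · rintro ⟨hs, hx⟩; exact ⟨(h x hx).mp hs, hx⟩
    · rintro ⟨hs, hx⟩; exact ⟨(h x hx).mpr hs, hx⟩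
  constructor <;> intro hs
  · exact Filter.mem_of_superset (key ▸ Filter.inter_mem hs ht) Set.inter_subset_left
  · exact Filter.mem_of_superset (key.symm ▸ Filter.inter_mem hs ht) Set.inter_subset_left

lemma uf_or {X : Type*} (ν : Ultrafilter X) (p q : X → Prop) :
    {x | p x ∨ q x} ∈ ν ↔ {x | p x} ∈ ν ∨ {x | q x} ∈ ν :=
  Ultrafilter.union_mem_iff

lemma uf_const_and {X : Type*} (ν : Ultrafilter X) (p : Prop) (q : X → Prop) :
    {x | p ∧ q x} ∈ ν ↔ p ∧ {x | q x} ∈ ν := by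
  by_cases hp : p
  · simp [hp]
  · simp only [hp, false_and, Set.setOf_false, false_iff]
    exact iff_false_intro Ultrafilter.empty_notMem


lemma satAB_basic (a b c : A) (Q : Set ℕ) : SatAB (diamLang c Q) a b := by
  intro ν hν
  have hQ : {x : Dom2 A | x.1.2.1 ∈ Q} ∈ ν ↔ {x : Dom2 A | x.1.2.2 ∈ Q} ∈ ν := by
    have : (fun x : Dom2 A => x.1.2.1) ⁻¹' Q ∈ ν ↔ (fun x : Dom2 A => x.1.2.2) ⁻¹' Q ∈ ν := by
      rw [← Ultrafilter.mem_map, ← Ultrafilter.mem_map, hν]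
    exact this
  by_cases hΔ : {x : Dom2 A | x.1.2.1 = x.1.2.2} ∈ ν
  · refine uf_congr ν hΔ fun x hx => ?_
    simp only [Set.mem_setOf_eq] at hx
    simp only [Set.mem_preimage, f2, if_neg (not_not_intro hx)]
  · have hΔc : {x : Dom2 A | x.1.2.1 = x.1.2.2}ᶜ ∈ ν :=
      Ultrafilter.compl_mem_iff_notMem.mpr hΔ
    have key : ∀ (u v : A) (x : Dom2 A), x.1.2.1 ≠ x.1.2.2 →
        (x ∈ f2 u v ⁻¹' diamLang c Q ↔
          x ∈ {y : Dom2 A | (∃ i, ∃ h : i < y.1.1.length,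
              i ≠ y.1.2.1 ∧ i ≠ y.1.2.2 ∧ y.1.1[i] = c ∧ i ∈ Q) ∨
            (u = c ∧ y.1.2.1 ∈ Q) ∨ (v = c ∧ y.1.2.2 ∈ Q)}) := by
      intro u v x hx
      simp only [Set.mem_preimage, f2, if_pos hx, Set.mem_setOf_eq]
      exact mem_diam_set2 x.2.1 x.2.2 hx u v c Q
    rw [uf_congr ν hΔc (fun x hx => key a b x hx),
        uf_congr ν hΔc (fun x hx => key b a x hx)]
    simp only [uf_or, uf_const_and]
    tauto

lemma satAAB_basic (a b c : A) (Q : Set ℕ) : SatAAB (diamLang c Q) a b := by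
  intro ν hν
  obtain ⟨hν1, hν2⟩ := hν
  have hQ1 : {x : Dom3 A | x.1.2.1 ∈ Q} ∈ ν ↔ {x : Dom3 A | x.1.2.2.1 ∈ Q} ∈ ν := by
    have : (fun x : Dom3 A => x.1.2.1) ⁻¹' Q ∈ ν ↔
        (fun x : Dom3 A => x.1.2.2.1) ⁻¹' Q ∈ ν := by
      rw [← Ultrafilter.mem_map, ← Ultrafilter.mem_map, hν1]
    exact this
  have hQ2 : {x : Dom3 A | x.1.2.2.1 ∈ Q} ∈ ν ↔ {x : Dom3 A | x.1.2.2.2 ∈ Q} ∈ ν := by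
    have : (fun x : Dom3 A => x.1.2.2.1) ⁻¹' Q ∈ ν ↔
        (fun x : Dom3 A => x.1.2.2.2) ⁻¹' Q ∈ ν := by
      rw [← Ultrafilter.mem_map, ← Ultrafilter.mem_map, hν2]
    exact this
  by_cases hΔ : {x : Dom3 A |
      ¬(x.1.2.1 ≠ x.1.2.2.1 ∧ x.1.2.1 ≠ x.1.2.2.2 ∧ x.1.2.2.1 ≠ x.1.2.2.2)} ∈ ν
  · refine uf_congr ν hΔ fun x hx => ?_
    simp only [Set.mem_setOf_eq] at hx
    simp only [Set.mem_preimage, f3, if_neg hx]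
  · have hΔc : {x : Dom3 A |
        ¬(x.1.2.1 ≠ x.1.2.2.1 ∧ x.1.2.1 ≠ x.1.2.2.2 ∧ x.1.2.2.1 ≠ x.1.2.2.2)}ᶜ ∈ ν :=
      Ultrafilter.compl_mem_iff_notMem.mpr hΔ
    have key : ∀ (u v t : A) (x : Dom3 A),
        (x.1.2.1 ≠ x.1.2.2.1 ∧ x.1.2.1 ≠ x.1.2.2.2 ∧ x.1.2.2.1 ≠ x.1.2.2.2) →
        (x ∈ f3 u v t ⁻¹' diamLang c Q ↔
          x ∈ {y : Dom3 A | (∃ i, ∃ h : i < y.1.1.length,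
              i ≠ y.1.2.1 ∧ i ≠ y.1.2.2.1 ∧ i ≠ y.1.2.2.2 ∧ y.1.1[i] = c ∧ i ∈ Q) ∨
            (u = c ∧ y.1.2.1 ∈ Q) ∨ (v = c ∧ y.1.2.2.1 ∈ Q) ∨ (t = c ∧ y.1.2.2.2 ∈ Q)}) := by
      intro u v t x hx
      simp only [Set.mem_preimage, f3, if_pos hx, Set.mem_setOf_eq]
      exact mem_diam_set3 x.2.1 x.2.2.1 x.2.2.2 hx.1 hx.2.1 hx.2.2 u v t c Q
    rw [uf_congr ν hΔc (fun x hx => key a a b x (not_not.mp hx)),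
        uf_congr ν hΔc (fun x hx => key a b b x (not_not.mp hx))]
    simp only [uf_or, uf_const_and]
    tauto

lemma satAA_basic (a c : A) (Q : Set ℕ) : SatAA (diamLang c Q) a := by
  intro ν hν
  have hQ : {x : Dom1 A | x.1.2 ∈ Q} ∈ ν ↔ {x : Dom1 A | x.1.1.length ∈ Q} ∈ ν := by
    have : (fun x : Dom1 A => x.1.2) ⁻¹' Q ∈ ν ↔
        (fun x : Dom1 A => x.1.1.length) ⁻¹' Q ∈ ν := by
      rw [← Ultrafilter.mem_map, ← Ultrafilter.mem_map, hν]
    exact this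
  have k1 : ∀ x : Dom1 A, x ∈ f1 a ⁻¹' diamLang c Q ↔
      x ∈ {y : Dom1 A | (∃ i, ∃ h : i < y.1.1.length, i ≠ y.1.2 ∧ y.1.1[i] = c ∧ i ∈ Q) ∨
        (a = c ∧ y.1.2 ∈ Q)} := fun x => by
    simp only [Set.mem_preimage, f1, Set.mem_setOf_eq]
    exact mem_diam_set1 x.2 a c Q
  have k2 : ∀ x : Dom1 A, x ∈ f1app a ⁻¹' diamLang c Q ↔
      x ∈ {y : Dom1 A | ((∃ i, ∃ h : i < y.1.1.length, i ≠ y.1.2 ∧ y.1.1[i] = c ∧ i ∈ Q) ∨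
        (a = c ∧ y.1.2 ∈ Q)) ∨ (a = c ∧ y.1.1.length ∈ Q)} := fun x => by
    simp only [Set.mem_preimage, f1app, Set.mem_setOf_eq]
    rw [mem_diam_append, mem_diam_set1 x.2, List.length_set]
  rw [uf_congr ν Filter.univ_mem (fun x _ => k1 x),
      uf_congr ν Filter.univ_mem (fun x _ => k2 x)]
  simp only [uf_or, uf_const_and]
  tauto

lemma sat_of_genBool {X : Type*} (u v : X → List A) (ν : Ultrafilter X)
    (hbasic : ∀ (c : A) (Q : Set ℕ), (u ⁻¹' diamLang c Q ∈ ν ↔ v ⁻¹' diamLang c Q ∈ ν))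
    {L : Set (List A)} (hL : B1 A L) :
    u ⁻¹' L ∈ ν ↔ v ⁻¹' L ∈ ν := by
  induction hL with
  | basic h => obtain ⟨c, Q, rfl⟩ := h; exact hbasic c Q
  | univ => simp
  | compl _ ih =>
    simp only [Set.preimage_compl, Ultrafilter.compl_mem_iff_notMem]
    exact not_congr ih
  | inter _ _ ih1 ih2 =>
    simp only [Set.preimage_inter]
    constructor <;> intro h
    · exact Filter.inter_mem
        (ih1.mp (Filter.mem_of_superset h Set.inter_subset_left))
        (ih2.mp (Filter.mem_of_superset h Set.inter_subset_right))
    · exact Filter.inter_mem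
        (ih1.mpr (Filter.mem_of_superset h Set.inter_subset_left))
        (ih2.mpr (Filter.mem_of_superset h Set.inter_subset_right))

/-- If a language `L ⊆ A*` belongs to `B₁`, then `L` satisfies the families of
ultrafilter equations `E_{ab=ba}`, `E_{aab=abb}` and `E_{a=a·a}` for all `a, b ∈ A`. -/
theorem statement1 (A : Type*) [Fintype A] [Nonempty A] (L : Set (List A))
    (hL : B1 A L) : ∀ a b : A, SatAB L a b ∧ SatAAB L a b ∧ SatAA L a := by
  intro a b
  refine ⟨?_, ?_, ?_⟩
  · intro ν hν
    exact sat_of_genBool _ _ ν (fun c Q => satAB_basic a b c Q ν hν) hL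
  · intro ν hν
    exact sat_of_genBool _ _ ν (fun c Q => satAAB_basic a b c Q ν hν) hL
  · intro ν hν
    exact sat_of_genBool _ _ ν (fun c Q => satAA_basic a c Q ν hν) hL


end Stmt1
end

section
/- Let A be a finite alphabet, k, n ≥ 1, and let p₁,...,pₙ : A*⊗(ℕᵏ)ⁿ → ℕᵏ and u, v : A*⊗(ℕᵏ)ⁿ → A* be maps. A language L ⊆ A* satisfies the family of ultrafilter equations E^{p₁,...,pₙ}_{u=v} if and only if there exists a finite colouring (Q₁,...,Q_ℓ) of ℕᵏ such that ⋃_{i=1}^ℓ ⋂_{j=1}^n p_j⁻¹(Q_i) ⊆ E_{L,u,v}. -/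
open Set

namespace Stmt5

/-- `A* ⊗ (ℕᵏ)ⁿ`: words together with `n` tuples of `k` positions. -/
abbrev DomKN (A : Type*) (k n : ℕ) : Type _ :=
  {x : List A × (Fin n → Fin k → ℕ) // ∀ m j, x.2 m j < x.1.length}

/-- A language `L ⊆ A*` satisfies the family of ultrafilter equations
`E^{p₁,...,pₙ}_{u=v}` if and only if there exists a finite colouring `(Q₁,...,Q_ℓ)` of
`ℕᵏ` such that `⋃_{i=1}^ℓ ⋂_{j=1}^n p_j⁻¹(Q_i) ⊆ E_{L,u,v}`. -/
theorem statement5 (A : Type*) [Fintype A] [Nonempty A] (k n : ℕ)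
    (hk : 1 ≤ k) (hn : 1 ≤ n)
    (p : Fin n → DomKN A k n → (Fin k → ℕ)) (u v : DomKN A k n → List A)
    (L : Set (List A)) :
    (∀ ν : Ultrafilter (DomKN A k n),
        (∀ i j : Fin n, Ultrafilter.map (p i) ν = Ultrafilter.map (p j) ν) →
          (u ⁻¹' L ∈ ν ↔ v ⁻¹' L ∈ ν)) ↔
      ∃ (ℓ : ℕ), 1 ≤ ℓ ∧ ∃ Q : Fin ℓ → Set (Fin k → ℕ),
        (Pairwise fun i j => Disjoint (Q i) (Q j)) ∧ (⋃ i, Q i = Set.univ) ∧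
        (⋃ i, ⋂ j, p j ⁻¹' Q i) ⊆ {x | u x ∈ L ↔ v x ∈ L} := by
  classical
  set S : Set (DomKN A k n) := {x | ¬ (u x ∈ L ↔ v x ∈ L)} with hSdef
  set Good : Set (Fin k → ℕ) → Prop :=
    fun T => ¬ ∃ x, x ∈ S ∧ ∀ j, p j x ∈ T with hGooddef
  have j0 : Fin n := ⟨0, hn⟩
  constructor
  · intro H
    by_cases hA : ∃ m, ∃ g : Fin m → Set (Fin k → ℕ),
        (∀ i, Good (g i)) ∧ (⋃ i, g i) = Set.univ
    · -- Case A : finitely many good sets cover; take the atoms of this family.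
      obtain ⟨m, g, hg, hcov⟩ := hA
      set e : (Fin m → Bool) ≃ Fin (2 ^ m) :=
        (Equiv.arrowCongr (Equiv.refl (Fin m)) finTwoEquiv.symm).trans
          finFunctionFinEquiv with he
      refine ⟨2 ^ m, Nat.one_le_two_pow, fun i =>
        {y | ∀ t : Fin m, y ∈ g t ↔ e.symm i t = true}, ?_, ?_, ?_⟩
      · intro i j hij
        rw [Set.disjoint_left]
        intro y hy1 hy2
        apply hij
        apply e.symm.injective.eq_iff.mp
        funext t
        have h1 : y ∈ g t ↔ e.symm i t = true := hy1 t
        have h2 : y ∈ g t ↔ e.symm j t = true := hy2 t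
        by_cases hy : y ∈ g t
        · rw [h1.mp hy, h2.mp hy]
        · cases hb1 : e.symm i t
          · cases hb2 : e.symm j t
            · rfl
            · exact absurd (h2.mpr hb2) hy
          · exact absurd (h1.mpr hb1) hy
      · apply Set.eq_univ_of_forall
        intro y
        refine Set.mem_iUnion.mpr ⟨e (fun t => decide (y ∈ g t)), fun t => ?_⟩
        rw [Equiv.symm_apply_apply]
        exact decide_eq_true_iff.symm
      · intro x hx
        by_contra hxS
        obtain ⟨i, hi⟩ := Set.mem_iUnion.mp hx
        have hi' : ∀ j, ∀ t : Fin m, p j x ∈ g t ↔ e.symm i t = true := by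
          intro j
          have h := Set.mem_iInter.mp hi j
          exact h
        have hmem : p j0 x ∈ ⋃ t, g t := hcov ▸ Set.mem_univ _
        obtain ⟨t, ht⟩ := Set.mem_iUnion.mp hmem
        have hbt : e.symm i t = true := (hi' j0 t).mp ht
        exact hg t ⟨x, hxS, fun j => (hi' j t).mpr hbt⟩
    · -- Case B : construct an ultrafilter contradicting H.
      exfalso
      -- first, an ultrafilter μ on K avoiding all good sets
      have hμ : ∃ μ : Ultrafilter (Fin k → ℕ), {s : Set (Fin k → ℕ) | Good sᶜ} ⊆ μ.sets := by
        apply Ultrafilter.exists_ultrafilter_of_finite_inter_nonempty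
        intro T hT
        have h1 : (⋃ s ∈ T, sᶜ) ≠ Set.univ := by
          intro hu
          refine hA ⟨T.card, fun i => ((T.equivFin.symm i : Set (Fin k → ℕ)))ᶜ,
            fun i => hT (T.equivFin.symm i).2, ?_⟩
          rw [← hu]
          ext y
          simp only [Set.mem_iUnion]
          constructor
          · rintro ⟨i, hi⟩; exact ⟨_, (T.equivFin.symm i).2, hi⟩
          · rintro ⟨s, hs, hy⟩; exact ⟨T.equivFin ⟨s, hs⟩, by simpa using hy⟩
        obtain ⟨y, hy⟩ := (Set.ne_univ_iff_exists_notMem _).mp h1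
        refine ⟨y, ?_⟩
        intro s hs
        simp only [Set.mem_iUnion, not_exists] at hy
        by_contra hys
        exact hy s hs (by simpa using hys)
      obtain ⟨μ, hμ⟩ := hμ
      -- every member of μ is not good
      have hnotgood : ∀ T ∈ μ, ∃ x, x ∈ S ∧ ∀ j, p j x ∈ T := by
        intro T hT
        by_contra hG
        have : Tᶜ ∈ μ := hμ (show Good (Tᶜᶜ) by rwa [compl_compl])
        exact Filter.compl_notMem hT this
      -- the filter whose ultrafilter extension contradicts H
      set F : Filter (DomKN A k n) := (⨅ j : Fin n, Filter.comap (p j) ↑μ) ⊓ Filter.principal S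
        with hFdef
      have hFne : F.NeBot := by
        rw [hFdef, Filter.inf_principal_neBot_iff]
        intro U hU
        obtain ⟨t, ht, rfl⟩ := (Filter.mem_iInf_of_finite _).mp hU
        choose T hT hTsub using fun j => Filter.mem_comap.mp (ht j)
        have hW : (⋂ j, T j) ∈ μ := Filter.iInter_mem.mpr hT
        obtain ⟨x, hxS, hx⟩ := hnotgood _ hW
        exact ⟨x, Set.mem_iInter.mpr
          (fun j => hTsub j (Set.mem_iInter.mp (hx j) j)), hxS⟩
      set ν := Ultrafilter.of F with hνdef
      have hνF : ↑ν ≤ F := Ultrafilter.of_le F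
      have hSν : S ∈ ν := hνF
        (by rw [hFdef]; exact Filter.mem_inf_of_right (Filter.mem_principal_self S))
      have hmap : ∀ j, Ultrafilter.map (p j) ν = μ := by
        intro j
        have h1 : ↑(Ultrafilter.map (p j) ν) ≤ (μ : Filter (Fin k → ℕ)) := by
          calc (Filter.map (p j) ↑ν) ≤ Filter.map (p j) F := Filter.map_mono hνF
          _ ≤ Filter.map (p j) (Filter.comap (p j) ↑μ) :=
              Filter.map_mono (le_trans inf_le_left (iInf_le _ j))
          _ ≤ ↑μ := Filter.map_comap_le
        exact Ultrafilter.coe_inj.mp (μ.unique h1)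
      have hIff := H ν (fun i j => by rw [hmap i, hmap j])
      by_cases hu : u ⁻¹' L ∈ ν
      · have hv := hIff.mp hu
        obtain ⟨x, hx⟩ := Filter.nonempty_of_mem
          (Filter.inter_mem hu (Filter.inter_mem hv hSν))
        exact hx.2.2 ⟨fun _ => hx.2.1, fun _ => hx.1⟩
      · have hv : v ⁻¹' L ∉ ν := fun h => hu (hIff.mpr h)
        rw [← Ultrafilter.compl_mem_iff_notMem] at hu hv
        obtain ⟨x, hx⟩ := Filter.nonempty_of_mem
          (Filter.inter_mem hu (Filter.inter_mem hv hSν))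
        exact hx.2.2 ⟨fun h => absurd h hx.1, fun h => absurd h hx.2.1⟩
  · -- easy direction
    rintro ⟨ℓ, hℓ, Q, hdisj, hcov, hsub⟩ ν hν
    have hQ : ∃ i, Q i ∈ Ultrafilter.map (p j0) ν := by
      by_contra h
      push_neg at h
      have h2 : (⋂ i, (Q i)ᶜ) ∈ Ultrafilter.map (p j0) ν :=
        Filter.iInter_mem.mpr fun i => Ultrafilter.compl_mem_iff_notMem.mpr (h i)
      rw [← Set.compl_iUnion, hcov, Set.compl_univ] at h2
      exact Filter.empty_notMem _ h2
    obtain ⟨i, hi⟩ := hQ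
    have hE : (⋂ j, p j ⁻¹' Q i) ∈ ν := by
      refine Filter.iInter_mem.mpr fun j => ?_
      have h3 : Q i ∈ Ultrafilter.map (p j) ν := (hν j0 j) ▸ hi
      exact Ultrafilter.mem_map.mp h3
    have hE' : {x | u x ∈ L ↔ v x ∈ L} ∈ ν :=
      Filter.mem_of_superset hE ((Set.subset_iUnion _ i).trans hsub)
    constructor
    · intro hu
      refine Filter.mem_of_superset (Filter.inter_mem hu hE') ?_
      rintro x ⟨hxu, hxe⟩; exact hxe.mp hxu
    · intro hv
      refine Filter.mem_of_superset (Filter.inter_mem hv hE') ?_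
      rintro x ⟨hxv, hxe⟩; exact hxe.mpr hxv

end Stmt5
end

section
/- Let A be a finite alphabet. A language L ⊆ A* satisfies the families of ultrafilter equations E_{ab=ba}, E_{aab=abb} and E_{a=a·a} for all a, b ∈ A if and only if there exists a finite colouring (Q₁,...,Q_ℓ) of ℕ such that for all a, b ∈ A: ⋃_{i=1}^ℓ A*⊗Q_i² ⊆ E_{L,f_{a,b},f_{b,a}}, ⋃_{i=1}^ℓ A*⊗Q_i³ ⊆ E_{L,f_{a,a,b},f_{a,b,b}}, and ⋃_{i=1}^ℓ L_{Q_i}⊗Q_i ⊆ E_{L,f_a,f_a·a}. -/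
open Set

namespace Stmt6

variable {A : Type*}

/-- `c_a(w)`: the set of positions of the word `w` carrying the letter `a`. -/
def contentSet (a : A) (w : List A) : Set ℕ :=
  {i | ∃ h : i < w.length, w.get ⟨i, h⟩ = a}

/-- `L_{◇^a_Q}`. -/
def diamLang (a : A) (Q : Set ℕ) : Set (List A) :=
  {w | (contentSet a w ∩ Q).Nonempty}

/-- `A* ⊗ ℕ`. -/
abbrev Dom1 (A : Type*) : Type _ := {x : List A × ℕ // x.2 < x.1.length}

/-- `A* ⊗ ℕ²`. -/
abbrev Dom2 (A : Type*) : Type _ :=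
  {x : List A × ℕ × ℕ // x.2.1 < x.1.length ∧ x.2.2 < x.1.length}

/-- `A* ⊗ ℕ³`. -/
abbrev Dom3 (A : Type*) : Type _ :=
  {x : List A × ℕ × ℕ × ℕ //
    x.2.1 < x.1.length ∧ x.2.2.1 < x.1.length ∧ x.2.2.2 < x.1.length}

/-- `f_{a,b}(w,j₁,j₂) = w(j₁→a)(j₂→b)` if `j₁ ≠ j₂`, and `w` otherwise. -/
def f2 (a b : A) : Dom2 A → List A := fun x =>
  if x.1.2.1 ≠ x.1.2.2 then (x.1.1.set x.1.2.1 a).set x.1.2.2 b else x.1.1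

/-- `f_{a,b,c}(w,j₁,j₂,j₃) = w(j₁→a)(j₂→b)(j₃→c)` if `j₁,j₂,j₃` are pairwise
distinct, and `w` otherwise. -/
def f3 (a b c : A) : Dom3 A → List A := fun x =>
  if x.1.2.1 ≠ x.1.2.2.1 ∧ x.1.2.1 ≠ x.1.2.2.2 ∧ x.1.2.2.1 ≠ x.1.2.2.2 then
    ((x.1.1.set x.1.2.1 a).set x.1.2.2.1 b).set x.1.2.2.2 c
  else x.1.1

/-- `f_a(w,i) = w(i→a)`. -/
def f1 (a : A) : Dom1 A → List A := fun x => x.1.1.set x.1.2 a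

/-- `f_a·a(w,i) = w(i→a).a`. -/
def f1app (a : A) : Dom1 A → List A := fun x => x.1.1.set x.1.2 a ++ [a]

/-- `L` satisfies the family of ultrafilter equations `E_{ab=ba}`. -/
def SatAB (L : Set (List A)) (a b : A) : Prop :=
  ∀ ν : Ultrafilter (Dom2 A),
    Ultrafilter.map (fun x => x.1.2.1) ν = Ultrafilter.map (fun x => x.1.2.2) ν →
      (f2 a b ⁻¹' L ∈ ν ↔ f2 b a ⁻¹' L ∈ ν)

/-- `L` satisfies the family of ultrafilter equations `E_{aab=abb}`. -/
def SatAAB (L : Set (List A)) (a b : A) : Prop :=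
  ∀ ν : Ultrafilter (Dom3 A),
    (Ultrafilter.map (fun x => x.1.2.1) ν = Ultrafilter.map (fun x => x.1.2.2.1) ν ∧
      Ultrafilter.map (fun x => x.1.2.2.1) ν = Ultrafilter.map (fun x => x.1.2.2.2) ν) →
      (f3 a a b ⁻¹' L ∈ ν ↔ f3 a b b ⁻¹' L ∈ ν)

/-- `L` satisfies the family of ultrafilter equations `E_{a=a·a}`. -/
def SatAA (L : Set (List A)) (a : A) : Prop :=
  ∀ ν : Ultrafilter (Dom1 A),
    Ultrafilter.map (fun x => x.1.2) ν = Ultrafilter.map (fun x => x.1.1.length) ν →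
      (f1 a ⁻¹' L ∈ ν ↔ f1app a ⁻¹' L ∈ ν)

/-- `⟨w,Q⟩`: the content of the word `w` on `Q ⊆ ℕ`. -/
def wordContent (w : List A) (Q : Set ℕ) : Set A :=
  {a | (contentSet a w ∩ Q).Nonempty}

/-- `E_{L,u,v} := {x : u(x) ∈ L ⟺ v(x) ∈ L}`. -/
def ESet {X : Type*} (L : Set (List A)) (u v : X → List A) : Set X :=
  {x | u x ∈ L ↔ v x ∈ L}


/-! ### Auxiliary material -/

section Aux

variable {X : Type*}

theorem iff_of_eset_mem {L : Set (List A)} {u v : X → List A} {ν : Ultrafilter X}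
    (h : ESet L u v ∈ ν) : u ⁻¹' L ∈ ν ↔ v ⁻¹' L ∈ ν := by
  constructor
  · intro hu
    exact Filter.mem_of_superset (Filter.inter_mem hu h) fun x hx => hx.2.1 hx.1
  · intro hv
    exact Filter.mem_of_superset (Filter.inter_mem hv h) fun x hx => hx.2.2 hx.1

theorem not_iff_of_compl_eset_mem {L : Set (List A)} {u v : X → List A}
    {ν : Ultrafilter X} (h : (ESet L u v)ᶜ ∈ ν) :
    ¬ (u ⁻¹' L ∈ ν ↔ v ⁻¹' L ∈ ν) := by
  intro hiff
  by_cases hu : u ⁻¹' L ∈ ν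
  · have hv := hiff.mp hu
    obtain ⟨x, hx1, hx2, hx3⟩ :=
      Filter.nonempty_of_mem (Filter.inter_mem hu (Filter.inter_mem hv h))
    exact hx3 (iff_of_true hx1 hx2)
  · have hv : v ⁻¹' L ∉ ν := fun hv => hu (hiff.mpr hv)
    rw [← Ultrafilter.compl_mem_iff_notMem] at hu hv
    obtain ⟨x, hx1, hx2, hx3⟩ :=
      Filter.nonempty_of_mem (Filter.inter_mem hu (Filter.inter_mem hv h))
    exact hx3 (iff_of_false hx1 hx2)

/-- The generic forward construction: an ultrafilter concentrated on `B` whose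
pushforwards along all the `p k` equal a given ultrafilter `μ`. -/
theorem exists_ultrafilter_aux {m : ℕ} (p : Fin m → X → ℕ)
    (μ : Ultrafilter ℕ) (B : Set X)
    (hwit : ∀ Q ∈ μ, ∃ x ∈ B, ∀ k, p k x ∈ Q) :
    ∃ ν : Ultrafilter X, B ∈ ν ∧ ∀ k, Ultrafilter.map (p k) ν = μ := by
  classical
  set F : Filter X := (⨅ k, Filter.comap (p k) ↑μ) ⊓ Filter.principal B with hF
  have hne : F.NeBot := by
    rw [← Filter.forall_mem_nonempty_iff_neBot]
    intro s hs
    rw [hF, Filter.mem_inf_iff_superset] at hs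
    obtain ⟨t₁, ht₁, t₂, ht₂, hsub⟩ := hs
    rw [Filter.mem_iInf_of_finite] at ht₁
    obtain ⟨t, ht, rfl⟩ := ht₁
    choose Qf hQf hQsub using fun k => Filter.mem_comap.mp (ht k)
    have hQ : (⋂ k, Qf k) ∈ μ := Filter.iInter_mem.mpr hQf
    obtain ⟨x, hxB, hxk⟩ := hwit _ hQ
    have hxt2 : x ∈ t₂ := Filter.mem_principal.mp ht₂ hxB
    refine ⟨x, hsub ⟨Set.mem_iInter.mpr fun k => hQsub k ?_, hxt2⟩⟩
    exact Set.mem_iInter.mp (hxk k) k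
  refine ⟨Ultrafilter.of F, ?_, ?_⟩
  · have hle : ↑(Ultrafilter.of F) ≤ Filter.principal B :=
      le_trans (Ultrafilter.of_le F) inf_le_right
    exact Filter.le_principal_iff.mp hle
  · intro k
    have hle : ↑(Ultrafilter.of F) ≤ Filter.comap (p k) ↑μ :=
      le_trans (Ultrafilter.of_le F) (le_trans inf_le_left (iInf_le _ k))
    have hmaple : Filter.map (p k) ↑(Ultrafilter.of F) ≤ ↑μ :=
      Filter.map_le_iff_le_comap.mpr hle
    have := μ.unique hmaple
    exact Ultrafilter.coe_injective (by rw [Ultrafilter.coe_map]; exact this)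

end Aux

section Good

variable (L : Set (List A))

def Good2 (a b : A) (Q : Set ℕ) : Prop :=
  {x : Dom2 A | x.1.2.1 ∈ Q ∧ x.1.2.2 ∈ Q} ⊆ ESet L (f2 a b) (f2 b a)

def Good3 (a b : A) (Q : Set ℕ) : Prop :=
  {x : Dom3 A | x.1.2.1 ∈ Q ∧ x.1.2.2.1 ∈ Q ∧ x.1.2.2.2 ∈ Q} ⊆
    ESet L (f3 a a b) (f3 a b b)

def Good1 (a : A) (Q : Set ℕ) : Prop :=
  {x : Dom1 A | x.1.2 ∈ Q ∧ x.1.1.length ∈ Q} ⊆ ESet L (f1 a) (f1app a)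

def Good (Q : Set ℕ) : Prop :=
  ∀ a b : A, Good2 L a b Q ∧ Good3 L a b Q ∧ Good1 L a Q

variable {L}

theorem Good2.mono {a b : A} {Q Q' : Set ℕ} (h : Good2 L a b Q) (hQ : Q' ⊆ Q) :
    Good2 L a b Q' := fun x hx => h ⟨hQ hx.1, hQ hx.2⟩

theorem Good3.mono {a b : A} {Q Q' : Set ℕ} (h : Good3 L a b Q) (hQ : Q' ⊆ Q) :
    Good3 L a b Q' := fun x hx => h ⟨hQ hx.1, hQ hx.2.1, hQ hx.2.2⟩

theorem Good1.mono {a : A} {Q Q' : Set ℕ} (h : Good1 L a Q) (hQ : Q' ⊆ Q) :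
    Good1 L a Q' := fun x hx => h ⟨hQ hx.1, hQ hx.2⟩

theorem Good.mono {Q Q' : Set ℕ} (h : Good L Q) (hQ : Q' ⊆ Q) : Good L Q' :=
  fun a b => ⟨(h a b).1.mono hQ, (h a b).2.1.mono hQ, (h a b).2.2.mono hQ⟩

end Good

section Cover

variable [Fintype A]

theorem exists_good_cover {L : Set (List A)}
    (hsat : ∀ a b : A, SatAB L a b ∧ SatAAB L a b ∧ SatAA L a) :
    ∃ s : Finset (Set ℕ), (∀ Q ∈ s, Good L Q) ∧ ⋃₀ (↑s : Set (Set ℕ)) = Set.univ := by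
  classical
  by_contra hcov
  push_neg at hcov
  set S : Set (Set ℕ) := {T : Set ℕ | Good L Tᶜ} with hS
  have hgen : (Filter.generate S).NeBot := by
    rw [Filter.generate_neBot_iff]
    intro t hts htfin
    by_contra hempty
    rw [Set.not_nonempty_iff_eq_empty] at hempty
    refine hcov (htfin.image compl).toFinset ?_ ?_
    · -- every member is good
      intro Q hQ
      rw [Set.Finite.mem_toFinset] at hQ
      obtain ⟨T, hTt, rfl⟩ := hQ
      exact hts hTt
    · -- covers univ
      ext n
      simp only [Set.mem_univ, iff_true, Set.mem_sUnion, Finset.mem_coe,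
        Set.Finite.mem_toFinset]
      have hn : n ∉ ⋂₀ t := by rw [hempty]; exact Set.notMem_empty n
      rw [Set.mem_sInter] at hn
      push_neg at hn
      obtain ⟨T, hTt, hnT⟩ := hn
      exact ⟨Tᶜ, ⟨T, hTt, rfl⟩, hnT⟩
  haveI := hgen
  set μ : Ultrafilter ℕ := Ultrafilter.of (Filter.generate S) with hμ
  have hle : (↑μ : Filter ℕ) ≤ Filter.generate S := Ultrafilter.of_le _
  have hbad : ∀ Q ∈ μ, ¬ Good L Q := by
    intro Q hQ hgood
    have hQc : Qᶜ ∈ S := by rw [hS]; simp only [Set.mem_setOf_eq, compl_compl]; exact hgood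
    have hQcμ : Qᶜ ∈ μ := hle (Filter.mem_generate_of_mem hQc)
    have : (∅ : Set ℕ) ∈ μ := by
      have := Filter.inter_mem hQ hQcμ
      rwa [Set.inter_compl_self] at this
    exact Filter.empty_notMem (↑μ : Filter ℕ) this
  -- extract a single bad case
  have hcase : ∃ a b : A,
      (∀ Q ∈ μ, ¬ Good2 L a b Q) ∨ (∀ Q ∈ μ, ¬ Good3 L a b Q) ∨
        (∀ Q ∈ μ, ¬ Good1 L a Q) := by
    by_contra hc
    push_neg at hc
    have h2 : ∀ a b : A, ∃ Q, Q ∈ μ ∧ Good2 L a b Q := by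
      intro a b
      obtain ⟨⟨Q, hQm, hQ⟩, -, -⟩ := hc a b
      exact ⟨Q, hQm, hQ⟩
    have h3 : ∀ a b : A, ∃ Q, Q ∈ μ ∧ Good3 L a b Q := by
      intro a b
      obtain ⟨-, ⟨Q, hQm, hQ⟩, -⟩ := hc a b
      exact ⟨Q, hQm, hQ⟩
    have h1 : ∀ a b : A, ∃ Q, Q ∈ μ ∧ Good1 L a Q := by
      intro a b
      obtain ⟨-, -, ⟨Q, hQm, hQ⟩⟩ := hc a b
      exact ⟨Q, hQm, hQ⟩
    choose Q2 hQ2m hQ2g using h2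
    choose Q3 hQ3m hQ3g using h3
    choose Q1 hQ1m hQ1g using h1
    set Qbig : Set ℕ :=
      (⋂ a, ⋂ b, Q2 a b) ∩ ((⋂ a, ⋂ b, Q3 a b) ∩ (⋂ a, ⋂ b, Q1 a b)) with hQbig
    have hmem : Qbig ∈ μ := by
      refine Filter.inter_mem ?_ (Filter.inter_mem ?_ ?_) <;>
        exact Filter.iInter_mem.mpr fun a => Filter.iInter_mem.mpr fun b => by
          first | exact hQ2m a b | exact hQ3m a b | exact hQ1m a b
    refine hbad Qbig hmem fun a b => ⟨?_, ?_, ?_⟩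
    · exact (hQ2g a b).mono fun n hn =>
        Set.mem_iInter.mp (Set.mem_iInter.mp hn.1 a) b
    · exact (hQ3g a b).mono fun n hn =>
        Set.mem_iInter.mp (Set.mem_iInter.mp hn.2.1 a) b
    · exact (hQ1g a b).mono fun n hn =>
        Set.mem_iInter.mp (Set.mem_iInter.mp hn.2.2 a) b
  obtain ⟨a, b, hcase⟩ := hcase
  rcases hcase with hc | hc | hc
  · -- E_{ab=ba} case
    have hwit : ∀ Q ∈ μ, ∃ x ∈ (ESet L (f2 a b) (f2 b a))ᶜ,
        ∀ k : Fin 2, ![fun x : Dom2 A => x.1.2.1, fun x => x.1.2.2] k x ∈ Q := by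
      intro Q hQ
      obtain ⟨x, hx1, hx2⟩ := Set.not_subset.mp (hc Q hQ)
      refine ⟨x, hx2, ?_⟩
      intro k
      fin_cases k
      · exact hx1.1
      · exact hx1.2
    obtain ⟨ν, hB, hmap⟩ := exists_ultrafilter_aux _ μ _ hwit
    have heq : Ultrafilter.map (fun x : Dom2 A => x.1.2.1) ν =
        Ultrafilter.map (fun x : Dom2 A => x.1.2.2) ν := by
      have h0 := hmap 0
      have h1 := hmap 1
      simp only [Matrix.cons_val_zero, Matrix.cons_val_one, Matrix.head_cons] at h0 h1
      rw [h0, h1]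
    exact not_iff_of_compl_eset_mem hB ((hsat a b).1 ν heq)
  · -- E_{aab=abb} case
    have hwit : ∀ Q ∈ μ, ∃ x ∈ (ESet L (f3 a a b) (f3 a b b))ᶜ,
        ∀ k : Fin 3, ![fun x : Dom3 A => x.1.2.1, fun x => x.1.2.2.1,
          fun x => x.1.2.2.2] k x ∈ Q := by
      intro Q hQ
      obtain ⟨x, hx1, hx2⟩ := Set.not_subset.mp (hc Q hQ)
      refine ⟨x, hx2, ?_⟩
      intro k
      fin_cases k
      · exact hx1.1
      · exact hx1.2.1
      · exact hx1.2.2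
    obtain ⟨ν, hB, hmap⟩ := exists_ultrafilter_aux _ μ _ hwit
    have h0 := hmap 0
    have h1 := hmap 1
    have h2 := hmap 2
    simp only [Matrix.cons_val_zero, Matrix.cons_val_one, Matrix.head_cons,
      Matrix.cons_val_two, Matrix.tail_cons] at h0 h1 h2
    exact not_iff_of_compl_eset_mem hB
      ((hsat a b).2.1 ν ⟨by rw [h0, h1], by rw [h1, h2]⟩)
  · -- E_{a=a·a} case
    have hwit : ∀ Q ∈ μ, ∃ x ∈ (ESet L (f1 a) (f1app a))ᶜ,
        ∀ k : Fin 2, ![fun x : Dom1 A => x.1.2, fun x => x.1.1.length] k x ∈ Q := by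
      intro Q hQ
      obtain ⟨x, hx1, hx2⟩ := Set.not_subset.mp (hc Q hQ)
      refine ⟨x, hx2, ?_⟩
      intro k
      fin_cases k
      · exact hx1.1
      · exact hx1.2
    obtain ⟨ν, hB, hmap⟩ := exists_ultrafilter_aux _ μ _ hwit
    have h0 := hmap 0
    have h1 := hmap 1
    simp only [Matrix.cons_val_zero, Matrix.cons_val_one, Matrix.head_cons] at h0 h1
    exact not_iff_of_compl_eset_mem hB ((hsat a b).2.2 ν (by rw [h0, h1]))

end Cover

theorem exists_Qi_mem {ℓ : ℕ} {Q : Fin ℓ → Set ℕ} (hcover : ⋃ i, Q i = Set.univ)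
    {X : Type*} (ν : Ultrafilter X) (p : X → ℕ) :
    ∃ i, Q i ∈ Ultrafilter.map p ν := by
  have hU : (⋃ i ∈ (Set.univ : Set (Fin ℓ)), Q i) ∈ Ultrafilter.map p ν := by
    rw [Set.biUnion_univ, hcover]; exact Filter.univ_mem
  obtain ⟨i, -, hi⟩ := (Ultrafilter.finite_biUnion_mem_iff Set.finite_univ).mp hU
  exact ⟨i, hi⟩

theorem statement6' (A : Type*) [Fintype A] [Nonempty A] (L : Set (List A)) :
    (∀ a b : A, SatAB L a b ∧ SatAAB L a b ∧ SatAA L a) ↔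
      ∃ (ℓ : ℕ), 1 ≤ ℓ ∧ ∃ Q : Fin ℓ → Set ℕ,
        (Pairwise fun i j => Disjoint (Q i) (Q j)) ∧ (⋃ i, Q i = Set.univ) ∧
        ∀ a b : A,
          ((⋃ i, {x : Dom2 A | x.1.2.1 ∈ Q i ∧ x.1.2.2 ∈ Q i}) ⊆
              ESet L (f2 a b) (f2 b a)) ∧
          ((⋃ i, {x : Dom3 A | x.1.2.1 ∈ Q i ∧ x.1.2.2.1 ∈ Q i ∧ x.1.2.2.2 ∈ Q i}) ⊆
              ESet L (f3 a a b) (f3 a b b)) ∧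
          ((⋃ i, {x : Dom1 A | x.1.2 ∈ Q i ∧ x.1.1.length ∈ Q i}) ⊆
              ESet L (f1 a) (f1app a)) := by
  classical
  constructor
  · -- forward direction
    intro hsat
    obtain ⟨s, hgood, hcover⟩ := exists_good_cover hsat
    set l : List (Set ℕ) := s.toList with hl
    have hl1 : 1 ≤ l.length := by
      rcases Nat.eq_zero_or_pos l.length with h0 | h1
      · exfalso
        have h0' : l = [] := List.eq_nil_of_length_eq_zero h0
        have : (0 : ℕ) ∈ ⋃₀ (↑s : Set (Set ℕ)) := by rw [hcover]; trivial
        obtain ⟨T, hT, -⟩ := this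
        have : T ∈ l := by rw [hl, Finset.mem_toList]; exact hT
        rw [h0'] at this
        exact List.not_mem_nil this
      · exact h1
    set Q₀ : Fin l.length → Set ℕ := fun i => l.get i with hQ₀
    have hQ₀good : ∀ i, Good L (Q₀ i) := by
      intro i
      apply hgood
      rw [← Finset.mem_toList]
      exact List.get_mem l i
    have hQ₀cover : ∀ n : ℕ, ∃ i, n ∈ Q₀ i := by
      intro n
      have : n ∈ ⋃₀ (↑s : Set (Set ℕ)) := by rw [hcover]; trivial
      obtain ⟨T, hT, hnT⟩ := this
      have hTl : T ∈ l := by rw [hl, Finset.mem_toList]; exact hT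
      obtain ⟨i, hi⟩ := List.mem_iff_get.mp hTl
      exact ⟨i, by rw [hQ₀]; simp only; rw [hi]; exact hnT⟩
    set Q : Fin l.length → Set ℕ :=
      fun i => Q₀ i \ ⋃ j, ⋃ (_ : j < i), Q₀ j with hQ
    have hQsub : ∀ i, Q i ⊆ Q₀ i := fun i => Set.diff_subset
    have hQgood : ∀ i, Good L (Q i) := fun i => (hQ₀good i).mono (hQsub i)
    refine ⟨l.length, hl1, Q, ?_, ?_, ?_⟩
    · -- pairwise disjoint
      have hlt : ∀ i j, i < j → Disjoint (Q i) (Q j) := by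
        intro i j hij
        rw [Set.disjoint_left]
        intro n hni hnj
        exact hnj.2 (Set.mem_iUnion.mpr ⟨i, Set.mem_iUnion.mpr ⟨hij, hni.1⟩⟩)
      intro i j hij
      rcases hij.lt_or_gt with h | h
      · exact hlt i j h
      · exact (hlt j i h).symm
    · -- union is univ
      ext n
      simp only [Set.mem_iUnion, Set.mem_univ, iff_true]
      have hP : ∃ k : ℕ, ∃ h : k < l.length, n ∈ Q₀ ⟨k, h⟩ := by
        obtain ⟨i, hi⟩ := hQ₀cover n
        exact ⟨i.1, i.2, hi⟩
      obtain ⟨hk, hmem⟩ := Nat.find_spec hP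
      refine ⟨⟨Nat.find hP, hk⟩, hmem, ?_⟩
      intro hbad
      rw [Set.mem_iUnion] at hbad
      obtain ⟨j, hj⟩ := hbad
      rw [Set.mem_iUnion] at hj
      obtain ⟨hjlt, hjm⟩ := hj
      exact Nat.find_min hP hjlt ⟨j.2, hjm⟩
    · -- inclusions
      intro a b
      exact ⟨Set.iUnion_subset fun i => (hQgood i a b).1,
        Set.iUnion_subset fun i => (hQgood i a b).2.1,
        Set.iUnion_subset fun i => (hQgood i a b).2.2⟩
  · -- backward direction
    rintro ⟨ℓ, hℓ, Q, hdisj, hcover, hsub⟩ a b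
    have key := fun {X : Type _} => exists_Qi_mem (Q := Q) hcover (X := X)
    refine ⟨?_, ?_, ?_⟩
    · intro ν heq
      obtain ⟨i, hi⟩ := key ν (fun x : Dom2 A => x.1.2.1)
      have h1 : (fun x : Dom2 A => x.1.2.1) ⁻¹' (Q i) ∈ ν := Ultrafilter.mem_map.mp hi
      have h2 : (fun x : Dom2 A => x.1.2.2) ⁻¹' (Q i) ∈ ν := by
        rw [heq] at hi; exact Ultrafilter.mem_map.mp hi
      apply iff_of_eset_mem
      refine Filter.mem_of_superset (Filter.inter_mem h1 h2) ?_
      intro x hx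
      exact (hsub a b).1 (Set.mem_iUnion.mpr ⟨i, hx.1, hx.2⟩)
    · intro ν ⟨heq1, heq2⟩
      obtain ⟨i, hi⟩ := key ν (fun x : Dom3 A => x.1.2.1)
      have h1 : (fun x : Dom3 A => x.1.2.1) ⁻¹' (Q i) ∈ ν := Ultrafilter.mem_map.mp hi
      have h2 : (fun x : Dom3 A => x.1.2.2.1) ⁻¹' (Q i) ∈ ν := by
        rw [heq1] at hi; exact Ultrafilter.mem_map.mp hi
      have h3 : (fun x : Dom3 A => x.1.2.2.2) ⁻¹' (Q i) ∈ ν := by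
        rw [heq1, heq2] at hi; exact Ultrafilter.mem_map.mp hi
      apply iff_of_eset_mem
      refine Filter.mem_of_superset (Filter.inter_mem h1 (Filter.inter_mem h2 h3)) ?_
      intro x hx
      exact (hsub a b).2.1 (Set.mem_iUnion.mpr ⟨i, hx.1, hx.2.1, hx.2.2⟩)
    · intro ν heq
      obtain ⟨i, hi⟩ := key ν (fun x : Dom1 A => x.1.2)
      have h1 : (fun x : Dom1 A => x.1.2) ⁻¹' (Q i) ∈ ν := Ultrafilter.mem_map.mp hi
      have h2 : (fun x : Dom1 A => x.1.1.length) ⁻¹' (Q i) ∈ ν := by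
        rw [heq] at hi; exact Ultrafilter.mem_map.mp hi
      apply iff_of_eset_mem
      refine Filter.mem_of_superset (Filter.inter_mem h1 h2) ?_
      intro x hx
      exact (hsub a b).2.2 (Set.mem_iUnion.mpr ⟨i, hx.1, hx.2⟩)
/-- A language `L ⊆ A*` satisfies the families of ultrafilter equations `E_{ab=ba}`,
`E_{aab=abb}` and `E_{a=a·a}` for all `a, b ∈ A` if and only if there exists a finite
colouring `(Q₁,...,Q_ℓ)` of `ℕ` witnessing the corresponding inclusions into the
sets `E_{L,u,v}`. -/
theorem statement6 (A : Type*) [Fintype A] [Nonempty A] (L : Set (List A)) :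
    (∀ a b : A, SatAB L a b ∧ SatAAB L a b ∧ SatAA L a) ↔
      ∃ (ℓ : ℕ), 1 ≤ ℓ ∧ ∃ Q : Fin ℓ → Set ℕ,
        (Pairwise fun i j => Disjoint (Q i) (Q j)) ∧ (⋃ i, Q i = Set.univ) ∧
        ∀ a b : A,
          ((⋃ i, {x : Dom2 A | x.1.2.1 ∈ Q i ∧ x.1.2.2 ∈ Q i}) ⊆
              ESet L (f2 a b) (f2 b a)) ∧
          ((⋃ i, {x : Dom3 A | x.1.2.1 ∈ Q i ∧ x.1.2.2.1 ∈ Q i ∧ x.1.2.2.2 ∈ Q i}) ⊆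
              ESet L (f3 a a b) (f3 a b b)) ∧
          ((⋃ i, {x : Dom1 A | x.1.2 ∈ Q i ∧ x.1.1.length ∈ Q i}) ⊆
              ESet L (f1 a) (f1app a)) := by
  exact statement6' A L

end Stmt6
end

section
/- Let A be a finite alphabet and k ≥ 1. The Boolean subalgebra of the powerset algebra of A* generated by the languages L_{◇^ā_Q}, for ā ∈ Aᵏ and Q ⊆ ℕᵏ, equals the Boolean subalgebra generated by the languages K_{𝒬,B̄} := {w ∈ A* : ⟨w,Q_i⟩ = B_i for all i ∈ {1,...,ℓ}}, where 𝒬 = (Q₁,...,Q_ℓ) ranges over finite colourings of ℕᵏ (ℓ ≥ 1) and B̄ = (B₁,...,B_ℓ) ranges over ℓ-tuples of subsets of Aᵏ. -/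
open Set

namespace Stmt11

/-- Membership in the Boolean subalgebra of `Set α` generated by a family `S`. -/
inductive GenBool {α : Type*} (S : Set (Set α)) : Set α → Prop
  | basic {s : Set α} : s ∈ S → GenBool S s
  | univ : GenBool S Set.univ
  | compl {s : Set α} : GenBool S s → GenBool S sᶜ
  | inter {s t : Set α} : GenBool S s → GenBool S t → GenBool S (s ∩ t)

variable {A : Type*} {k : ℕ}

/-- `c_ā(w)`: the `ā`-content of a word `w`, i.e. the set of `k`-tuples of positions
of `w` carrying the `k`-tuple of letters `ā`. -/
def contentK (a : Fin k → A) (w : List A) : Set (Fin k → ℕ) :=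
  {i | ∀ j, ∃ h : i j < w.length, w.get ⟨i j, h⟩ = a j}

/-- `L_{◇^ā_Q}`. -/
def diamLangK (a : Fin k → A) (Q : Set (Fin k → ℕ)) : Set (List A) :=
  {w | (contentK a w ∩ Q).Nonempty}

/-- `⟨w,Q⟩`: the content of a word `w` on `Q ⊆ ℕᵏ`. -/
def wordContentK (w : List A) (Q : Set (Fin k → ℕ)) : Set (Fin k → A) :=
  {a | (contentK a w ∩ Q).Nonempty}

/-- The language `K_{𝒬,B̄}` of words having content `B_i` on each colour `Q_i`. -/
def KLang {l : ℕ} (Q : Fin l → Set (Fin k → ℕ)) (B : Fin l → Set (Fin k → A)) :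
    Set (List A) :=
  {w | ∀ i, wordContentK w (Q i) = B i}

section Helpers

variable {α : Type*} {S T : Set (Set α)}

lemma GenBool.mono (h : ∀ s ∈ S, GenBool T s) :
    ∀ {x}, GenBool S x → GenBool T x := by
  intro x hx
  induction hx with
  | basic hs => exact h _ hs
  | univ => exact GenBool.univ
  | compl _ ih => exact ih.compl
  | inter _ _ ih1 ih2 => exact ih1.inter ih2

lemma GenBool.biInter {ι : Type*} (s : Finset ι) (f : ι → Set α)
    (h : ∀ i, GenBool S (f i)) : GenBool S (⋂ i ∈ s, f i) := by
  classical
  induction s using Finset.induction with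
  | empty => simpa using GenBool.univ (S := S)
  | insert _ _ hx ih =>
      rw [Finset.set_biInter_insert]
      exact (h _).inter ih

lemma GenBool.iInter' {ι : Type*} [Finite ι] (f : ι → Set α)
    (h : ∀ i, GenBool S (f i)) : GenBool S (⋂ i, f i) := by
  classical
  haveI := Fintype.ofFinite ι
  have := GenBool.biInter (S := S) Finset.univ f h
  simpa using this

lemma GenBool.iUnion' {ι : Type*} [Finite ι] (f : ι → Set α)
    (h : ∀ i, GenBool S (f i)) : GenBool S (⋃ i, f i) := by
  have heq : (⋃ i, f i) = (⋂ i, (f i)ᶜ)ᶜ := by simp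
  rw [heq]
  exact (GenBool.iInter' _ fun i => (h i).compl).compl

end Helpers

lemma mem_diam_iff {a : Fin k → A} {w : List A} {Q : Set (Fin k → ℕ)} :
    w ∈ diamLangK a Q ↔ a ∈ wordContentK w Q := Iff.rfl

/-- The Boolean subalgebra generated by the languages `L_{◇^ā_Q}` equals the Boolean
subalgebra generated by the languages `K_{𝒬,B̄}`, where `𝒬` ranges over finite
colourings of `ℕᵏ` and `B̄` over tuples of subsets of `Aᵏ`. -/
theorem statement11 (A : Type*) [Fintype A] [Nonempty A] (k : ℕ) (hk : 1 ≤ k) :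
    GenBool {L : Set (List A) |
        ∃ (a : Fin k → A) (Q : Set (Fin k → ℕ)), L = diamLangK a Q} =
      GenBool {L : Set (List A) |
        ∃ (l : ℕ), 1 ≤ l ∧
          ∃ (Q : Fin l → Set (Fin k → ℕ)) (B : Fin l → Set (Fin k → A)),
            (Pairwise fun i j => Disjoint (Q i) (Q j)) ∧ (⋃ i, Q i = Set.univ) ∧
            L = KLang Q B} := by
  classical
  set SD := {L : Set (List A) |
      ∃ (a : Fin k → A) (Q : Set (Fin k → ℕ)), L = diamLangK a Q} with hSD
  set SK := {L : Set (List A) |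
      ∃ (l : ℕ), 1 ≤ l ∧
        ∃ (Q : Fin l → Set (Fin k → ℕ)) (B : Fin l → Set (Fin k → A)),
          (Pairwise fun i j => Disjoint (Q i) (Q j)) ∧ (⋃ i, Q i = Set.univ) ∧
          L = KLang Q B} with hSK
  have hDK : ∀ L ∈ SD, GenBool SK L := by
    rintro L ⟨a, Q, rfl⟩
    have key : diamLangK a Q =
        ⋃ B : {B : Fin 2 → Set (Fin k → A) // a ∈ B 0},
          KLang ![Q, Qᶜ] B.1 := by
      ext w
      simp only [mem_iUnion]
      constructor
      · intro hw
        refine ⟨⟨![wordContentK w Q, wordContentK w Qᶜ], hw⟩, ?_⟩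
        intro i
        fin_cases i <;> rfl
      · rintro ⟨⟨B, haB⟩, hB⟩
        have h0 := hB 0
        have : wordContentK w Q = B 0 := h0
        exact mem_diam_iff.2 (this.symm ▸ haB)
    rw [key]
    refine GenBool.iUnion' _ fun B => GenBool.basic ?_
    refine ⟨2, by norm_num, ![Q, Qᶜ], B.1, ?_, ?_, rfl⟩
    · intro i j hij
      fin_cases i <;> fin_cases j <;>
        simp_all [disjoint_compl_right, disjoint_compl_left]
    · ext x
      simp only [mem_iUnion, mem_univ, iff_true]
      by_cases hx : x ∈ Q
      · exact ⟨0, hx⟩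
      · exact ⟨1, hx⟩
  have hKD : ∀ L ∈ SK, GenBool SD L := by
    rintro L ⟨l, hl, Q, B, hdisj, hcov, rfl⟩
    have key : KLang Q B = ⋂ i, ⋂ a,
        (if a ∈ B i then diamLangK a (Q i) else (diamLangK a (Q i))ᶜ) := by
      ext w
      simp only [mem_iInter, KLang, mem_setOf_eq]
      constructor
      · intro h i a
        by_cases ha : a ∈ B i
        · rw [if_pos ha]
          exact mem_diam_iff.2 ((h i).symm ▸ ha)
        · rw [if_neg ha]
          intro hw
          exact ha ((h i) ▸ mem_diam_iff.1 hw)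
      · intro h i
        ext a
        have hia := h i a
        by_cases ha : a ∈ B i
        · rw [if_pos ha] at hia
          exact ⟨fun _ => ha, fun _ => mem_diam_iff.1 hia⟩
        · rw [if_neg ha] at hia
          exact ⟨fun haw => absurd (mem_diam_iff.2 haw) hia, fun h' => absurd h' ha⟩
    rw [key]
    refine GenBool.iInter' _ fun i => GenBool.iInter' _ fun a => ?_
    by_cases ha : a ∈ B i
    · rw [if_pos ha]
      exact GenBool.basic (show diamLangK a (Q i) ∈ SD from ⟨a, Q i, rfl⟩)
    · rw [if_neg ha]
      exact (GenBool.basic (show diamLangK a (Q i) ∈ SD from ⟨a, Q i, rfl⟩)).compl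
  ext L
  exact ⟨GenBool.mono hDK, GenBool.mono hKD⟩

end Stmt11
end

section
/- Let A be a finite alphabet, k ≥ 1, and C = (C_ā)_{ā∈Aᵏ} a family of closed subsets of the space of ultrafilters on ℕᵏ (with its Stone topology). Then there exists an ultrafilter γ on A* such that for every ā ∈ Aᵏ and every Q ⊆ ℕᵏ one has (every α ∈ C_ā contains Q) ⟺ L_{□^ā_Q} ∈ γ, if and only if C satisfies the colouring condition. -/
open Set

namespace Stmt13

variable {A : Type*} {k : ℕ}

/-- `c_ā(w)`: the `ā`-content of a word `w`. -/
def contentK (a : Fin k → A) (w : List A) : Set (Fin k → ℕ) :=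
  {i | ∀ j, ∃ h : i j < w.length, w.get ⟨i j, h⟩ = a j}

/-- `L_{□^ā_Q}`. -/
def boxLangK (a : Fin k → A) (Q : Set (Fin k → ℕ)) : Set (List A) :=
  {w | contentK a w ⊆ Q}

/-- `⟨w,Q⟩`: the content of a word `w` on `Q ⊆ ℕᵏ`. -/
def wordContentK (w : List A) (Q : Set (Fin k → ℕ)) : Set (Fin k → A) :=
  {a | (contentK a w ∩ Q).Nonempty}

/-- `⟨C,Q⟩`: the content of a generalized word `C` on `Q ⊆ ℕᵏ`. -/
def genContentK (C : (Fin k → A) → Set (Ultrafilter (Fin k → ℕ)))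
    (Q : Set (Fin k → ℕ)) : Set (Fin k → A) :=
  {a | ∃ α ∈ C a, Q ∈ α}

/-- `C` satisfies the colouring condition: for every finite colouring of `ℕᵏ` there
is a word with the same profile as `C`. -/
def ColouringCondition (C : (Fin k → A) → Set (Ultrafilter (Fin k → ℕ))) : Prop :=
  ∀ (l : ℕ), 1 ≤ l → ∀ Q : Fin l → Set (Fin k → ℕ),
    (Pairwise fun i j => Disjoint (Q i) (Q j)) → (⋃ i, Q i = Set.univ) →
    ∃ w : List A, ∀ i, wordContentK w (Q i) = genContentK C (Q i)

lemma mem_box_compl_iff (a : Fin k → A) (Q : Set (Fin k → ℕ)) (w : List A) :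
    w ∈ boxLangK a Qᶜ ↔ a ∉ wordContentK w Q := by
  simp [boxLangK, wordContentK, Set.subset_compl_iff_disjoint_right,
    Set.disjoint_iff_inter_eq_empty, Set.not_nonempty_iff_eq_empty]

/-- Key finite-intersection-property lemma for the backward direction. -/
lemma fip_lemma (C : (Fin k → A) → Set (Ultrafilter (Fin k → ℕ)))
    (hcc : ColouringCondition C)
    (X : (Fin k → A) × Set (Fin k → ℕ) → Set (List A))
    (hX1 : ∀ p, (∀ α ∈ C p.1, p.2 ∈ α) → X p = boxLangK p.1 p.2)
    (hX2 : ∀ p, ¬ (∀ α ∈ C p.1, p.2 ∈ α) → X p = (boxLangK p.1 p.2)ᶜ)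
    (u : Set ((Fin k → A) × Set (Fin k → ℕ))) (hu : u.Finite) :
    (⋂ p ∈ u, X p).Nonempty := by
  classical
  haveI := hu.fintype
  -- atoms of the Boolean algebra generated by the second components of `u`
  set R : (u → Bool) → Set (Fin k → ℕ) :=
    fun σ => {x | ∀ p : u, x ∈ (p : (Fin k → A) × Set (Fin k → ℕ)).2 ↔ σ p = true}
    with hR
  have hsig : ∀ x : Fin k → ℕ,
      x ∈ R (fun q => decide (x ∈ (q : (Fin k → A) × Set (Fin k → ℕ)).2)) :=
    fun x q => (decide_eq_true_iff).symm
  have hcov : ⋃ σ, R σ = Set.univ := by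
    ext x
    simp only [Set.mem_univ, iff_true, Set.mem_iUnion]
    exact ⟨_, hsig x⟩
  have hdisj : ∀ σ τ : u → Bool, σ ≠ τ → Disjoint (R σ) (R τ) := by
    intro σ τ hne
    rw [Set.disjoint_left]
    intro x hxσ hxτ
    apply hne
    funext p
    have h1 := hxσ p
    have h2 := hxτ p
    rw [h1] at h2
    cases hσ : σ p <;> cases hτ : τ p <;> simp_all
  -- if an atom meets `p.2` (`p ∈ u`) then it is contained in it, and dually
  have hsub : ∀ (σ : u → Bool) (p) (hp : p ∈ u),
      (σ ⟨p, hp⟩ = true → R σ ⊆ p.2) ∧ (σ ⟨p, hp⟩ = false → R σ ⊆ p.2ᶜ) := by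
    intro σ p hp
    constructor
    · intro hb x hx
      exact (hx ⟨p, hp⟩).2 hb
    · intro hb x hx hxp
      rw [(hx ⟨p, hp⟩).1 hxp] at hb
      simp at hb
  -- transport to a `Fin l` indexed colouring
  let e := Fintype.equivFin (u → Bool)
  have hl : 1 ≤ Fintype.card (u → Bool) := Fintype.card_pos
  obtain ⟨w, hw⟩ := hcc (Fintype.card (u → Bool)) hl (fun i => R (e.symm i))
    (fun i j hij => hdisj _ _ (fun h => hij (by
      have := congrArg e h; simpa using this)))
    (by
      ext x
      simp only [Set.mem_univ, iff_true, Set.mem_iUnion]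
      exact ⟨e (fun q => decide (x ∈ (q : (Fin k → A) × Set (Fin k → ℕ)).2)), by
        simpa using hsig x⟩)
  have hw' : ∀ σ : u → Bool, wordContentK w (R σ) = genContentK C (R σ) := by
    intro σ
    have := hw (e σ)
    simpa using this
  refine ⟨w, ?_⟩
  rw [Set.mem_iInter₂]
  intro p hp
  by_cases hP : ∀ α ∈ C p.1, p.2 ∈ α
  · rw [hX1 p hP]
    intro x hx
    by_contra hxQ
    -- x lies in the atom of its signature
    set σ : u → Bool := fun q => decide (x ∈ (q : (Fin k → A) × Set (Fin k → ℕ)).2)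
      with hσdef
    have hmem : p.1 ∈ wordContentK w (R σ) := ⟨x, hx, hsig x⟩
    rw [hw'] at hmem
    obtain ⟨α, hαC, hRα⟩ := hmem
    have hσp : σ ⟨p, hp⟩ = false := by
      simp [hσdef, hxQ]
    have hRsub : R σ ⊆ p.2ᶜ := (hsub σ p hp).2 hσp
    have : p.2ᶜ ∈ α := Filter.mem_of_superset hRα hRsub
    exact (Ultrafilter.compl_mem_iff_notMem.mp this) (hP α hαC)
  · rw [hX2 p hP]
    push_neg at hP
    obtain ⟨α, hαC, hQα⟩ := hP
    -- some atom lies in α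
    have huniv : (⋃ σ, R σ) ∈ α := by rw [hcov]; exact Filter.univ_mem
    have : ∃ σ, R σ ∈ α := by
      rw [← Set.biUnion_univ] at huniv
      obtain ⟨σ, -, hσ⟩ := (Ultrafilter.finite_biUnion_mem_iff Set.finite_univ).mp huniv
      exact ⟨σ, hσ⟩
    obtain ⟨σ, hσα⟩ := this
    have hσp : σ ⟨p, hp⟩ = false := by
      by_contra hne
      rw [Bool.not_eq_false] at hne
      exact hQα (Filter.mem_of_superset hσα ((hsub σ p hp).1 hne))
    have hRsub : R σ ⊆ p.2ᶜ := (hsub σ p hp).2 hσp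
    have hmem : p.1 ∈ genContentK C (R σ) := ⟨α, hαC, hσα⟩
    rw [← hw'] at hmem
    obtain ⟨x, hxc, hxR⟩ := hmem
    intro hsubQ
    exact hRsub hxR (hsubQ hxc)

/-- A family `C = (C_ā)` of closed subsets of the ultrafilter space on `ℕᵏ` arises
from an ultrafilter `γ` on `A*` (in the sense of Proposition 2.4) if and only if `C`
satisfies the colouring condition. -/
theorem statement13 (A : Type*) [Fintype A] [Nonempty A] (k : ℕ) (hk : 1 ≤ k)
    (C : (Fin k → A) → Set (Ultrafilter (Fin k → ℕ)))
    (hC : ∀ a, IsClosed (C a)) :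
    (∃ γ : Ultrafilter (List A),
        ∀ (a : Fin k → A) (Q : Set (Fin k → ℕ)),
          (∀ α ∈ C a, Q ∈ α) ↔ boxLangK a Q ∈ γ) ↔
      ColouringCondition C := by
  constructor
  · rintro ⟨γ, hγ⟩ l hl Q hdis hcov
    classical
    have hT : ∀ (i : Fin l) (a : Fin k → A),
        (if a ∈ genContentK C (Q i) then (boxLangK a (Q i)ᶜ)ᶜ else boxLangK a (Q i)ᶜ)
          ∈ (γ : Filter (List A)) := by
      intro i a
      split_ifs with ha
      · obtain ⟨α, hαC, hQα⟩ := ha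
        rw [Ultrafilter.mem_coe, Ultrafilter.compl_mem_iff_notMem, ← hγ]
        intro h
        exact (Ultrafilter.compl_mem_iff_notMem.mp (h α hαC)) hQα
      · rw [Ultrafilter.mem_coe, ← hγ]
        intro α hαC
        rw [Ultrafilter.compl_mem_iff_notMem]
        intro hQα
        exact ha ⟨α, hαC, hQα⟩
    have hmem : (⋂ i, ⋂ a, (if a ∈ genContentK C (Q i) then (boxLangK a (Q i)ᶜ)ᶜ
        else boxLangK a (Q i)ᶜ)) ∈ (γ : Filter (List A)) :=
      Filter.iInter_mem.mpr fun i => Filter.iInter_mem.mpr fun a => hT i a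
    obtain ⟨w, hwmem⟩ := Filter.nonempty_of_mem hmem
    refine ⟨w, fun i => ?_⟩
    ext a
    have hw' := Set.mem_iInter.mp (Set.mem_iInter.mp hwmem i) a
    by_cases ha : a ∈ genContentK C (Q i)
    · rw [if_pos ha] at hw'
      have hwc : a ∈ wordContentK w (Q i) := by
        by_contra hcon
        exact hw' ((mem_box_compl_iff a (Q i) w).mpr hcon)
      simp only [hwc, ha]
    · rw [if_neg ha] at hw'
      have hwc := (mem_box_compl_iff a (Q i) w).mp hw'
      simp only [hwc, ha]
  · intro hcc
    classical
    let X : (Fin k → A) × Set (Fin k → ℕ) → Set (List A) := fun p =>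
      if ∀ α ∈ C p.1, p.2 ∈ α then boxLangK p.1 p.2 else (boxLangK p.1 p.2)ᶜ
    have hX1 : ∀ p, (∀ α ∈ C p.1, p.2 ∈ α) → X p = boxLangK p.1 p.2 :=
      fun p h => if_pos h
    have hX2 : ∀ p, ¬(∀ α ∈ C p.1, p.2 ∈ α) → X p = (boxLangK p.1 p.2)ᶜ :=
      fun p h => if_neg h
    have hne : (Filter.generate (Set.range X)).NeBot := by
      rw [Filter.generate_neBot_iff]
      intro t hts htfin
      have h : ∀ s : t, ∃ p, X p = (s : Set (List A)) := fun s => hts s.2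
      choose g hg using h
      haveI := htfin.to_subtype
      obtain ⟨w, hwmem⟩ := fip_lemma C hcc X hX1 hX2 (Set.range g) (Set.finite_range g)
      refine ⟨w, ?_⟩
      intro s hs
      have hws := Set.mem_iInter₂.mp hwmem (g ⟨s, hs⟩) ⟨⟨s, hs⟩, rfl⟩
      rwa [hg ⟨s, hs⟩] at hws
    refine ⟨Ultrafilter.of (Filter.generate (Set.range X)), fun a Q => ?_⟩
    have hle := Ultrafilter.of_le (Filter.generate (Set.range X))
    have hXmem : X (a, Q) ∈ (Ultrafilter.of (Filter.generate (Set.range X)) :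
        Filter (List A)) :=
      hle (Filter.mem_generate_of_mem ⟨(a, Q), rfl⟩)
    constructor
    · intro hP
      rwa [hX1 (a, Q) hP] at hXmem
    · intro hmem α hαC
      by_contra hQα
      have hnP : ¬ ∀ β ∈ C a, Q ∈ β := fun h => hQα (h α hαC)
      rw [hX2 (a, Q) hnP] at hXmem
      exact (Ultrafilter.compl_mem_iff_notMem.mp hXmem) hmem


end Stmt13
end

section
/- Let A be a finite alphabet, k ≥ 1, and C = (C_ā)_{ā∈Aᵏ} a family of subsets of the space of ultrafilters on ℕᵏ satisfying the colouring condition. Then for every p̄ = (p₁,...,p_k) ∈ ℕᵏ and every ā = (a₁,...,a_k) ∈ Aᵏ: p̄ ∈ Cont(C_ā) if and only if for every j ∈ {1,...,k}, the constant tuple (p_j,...,p_j) belongs to Cont(C_{(a_j,...,a_j)}). -/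
open Set

namespace Stmt14

variable {A : Type*} {k : ℕ}

/-- `c_ā(w)`: the `ā`-content of a word `w`. -/
def contentK (a : Fin k → A) (w : List A) : Set (Fin k → ℕ) :=
  {i | ∀ j, ∃ h : i j < w.length, w.get ⟨i j, h⟩ = a j}

/-- `⟨w,Q⟩`: the content of a word `w` on `Q ⊆ ℕᵏ`. -/
def wordContentK (w : List A) (Q : Set (Fin k → ℕ)) : Set (Fin k → A) :=
  {a | (contentK a w ∩ Q).Nonempty}

/-- `⟨C,Q⟩`: the content of a generalized word `C` on `Q ⊆ ℕᵏ`. -/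
def genContentK (C : (Fin k → A) → Set (Ultrafilter (Fin k → ℕ)))
    (Q : Set (Fin k → ℕ)) : Set (Fin k → A) :=
  {a | ∃ α ∈ C a, Q ∈ α}

/-- `C` satisfies the colouring condition: for every finite colouring of `ℕᵏ` there
is a word with the same profile as `C`. -/
def ColouringCondition (C : (Fin k → A) → Set (Ultrafilter (Fin k → ℕ))) : Prop :=
  ∀ (l : ℕ), 1 ≤ l → ∀ Q : Fin l → Set (Fin k → ℕ),
    (Pairwise fun i j => Disjoint (Q i) (Q j)) → (⋃ i, Q i = Set.univ) →
    ∃ w : List A, ∀ i, wordContentK w (Q i) = genContentK C (Q i)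

/-- `Cont(C)`: the content of a set of ultrafilters on `ℕᵏ`, i.e. the tuples whose
principal ultrafilter lies in it. -/
def Cont (C : Set (Ultrafilter (Fin k → ℕ))) : Set (Fin k → ℕ) :=
  {i | (pure i : Ultrafilter (Fin k → ℕ)) ∈ C}

/-- Colouring function used to isolate `p` and the constant tuples derived from `p`. -/
noncomputable def colf (p : Fin k → ℕ) (q : Fin k → ℕ) : Fin (k + 2) :=
  if q = p then ⟨0, by omega⟩
  else if h : ∃ j : Fin k, q = fun _ => p j then
    ⟨(h.choose : ℕ) + 1, by have := h.choose.isLt; omega⟩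
  else ⟨k + 1, by omega⟩

lemma colf_fiber_p (p : Fin k → ℕ) : {q | colf p q = colf p p} = {p} := by
  ext q
  simp only [mem_setOf_eq, mem_singleton_iff]
  constructor
  · intro h
    by_contra hq
    simp only [colf, hq, if_false, if_true, ite_true, ite_false] at h
    split at h
    · exact absurd (congrArg Fin.val h) (by simp)
    · exact absurd (congrArg Fin.val h) (by simp)
  · rintro rfl; rfl

lemma colf_fiber_const (p : Fin k → ℕ) (j : Fin k) :
    {q | colf p q = colf p fun _ => p j} = {fun _ => p j} := by
  by_cases hp : (fun _ => p j) = p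
  · rw [hp]; exact colf_fiber_p p
  have h0 : ∃ j' : Fin k, (fun _ => p j) = fun _ : Fin k => p j' := ⟨j, rfl⟩
  have hval : colf p (fun _ => p j)
      = ⟨(h0.choose : ℕ) + 1, by have := h0.choose.isLt; omega⟩ := by
    rw [colf, if_neg hp, dif_pos h0]
  ext q
  simp only [mem_setOf_eq, mem_singleton_iff]
  constructor
  · intro h
    rw [hval] at h
    by_cases hq : q = p
    · subst hq
      rw [colf, if_pos rfl] at h
      exact absurd (congrArg Fin.val h) (by simp)
    rw [colf, if_neg hq] at h
    split at h
    · rename_i h1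
      have hvv : (h1.choose : ℕ) = (h0.choose : ℕ) := by
        have := congrArg Fin.val h; simpa using this
      have : h1.choose = h0.choose := Fin.ext hvv
      rw [h1.choose_spec, this, ← h0.choose_spec]
    · have := congrArg Fin.val h
      simp only at this
      have := h0.choose.isLt
      omega
  · rintro rfl; rfl

/-- If `C` satisfies the colouring condition then, for every `p̄ ∈ ℕᵏ` and
`ā ∈ Aᵏ`, `p̄ ∈ Cont(C_ā)` iff for every `j`, `(p_j,...,p_j) ∈ Cont(C_{(a_j,...,a_j)})`. -/
theorem statement14 (A : Type*) [Fintype A] [Nonempty A] (k : ℕ) (hk : 1 ≤ k)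
    (C : (Fin k → A) → Set (Ultrafilter (Fin k → ℕ)))
    (hC : ColouringCondition C)
    (p : Fin k → ℕ) (a : Fin k → A) :
    p ∈ Cont (C a) ↔ ∀ j, (fun _ => p j) ∈ Cont (C fun _ => a j) := by
  classical
  obtain ⟨w, hw⟩ := hC (k + 2) (by omega) (fun i => {q | colf p q = i})
    (by
      intro i i' hii
      rw [Set.disjoint_left]
      rintro q hq hq'
      exact hii (hq ▸ hq'.symm ▸ rfl))
    (by
      ext q
      simp only [mem_iUnion, mem_setOf_eq, mem_univ, iff_true]
      exact ⟨_, rfl⟩)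
  -- key reduction: for a point whose fiber is a singleton, membership in `Cont`
  -- is equivalent to membership of the point in the content of the word `w`.
  have key : ∀ (q₀ : Fin k → ℕ) (b : Fin k → A),
      ({q | colf p q = colf p q₀} = {q₀}) →
      (q₀ ∈ Cont (C b) ↔ q₀ ∈ contentK b w) := by
    intro q₀ b hfib
    have h := hw (colf p q₀)
    rw [hfib] at h
    have hb : b ∈ wordContentK w {q₀} ↔ b ∈ genContentK C {q₀} := by rw [h]
    have hword : b ∈ wordContentK w ({q₀} : Set (Fin k → ℕ)) ↔ q₀ ∈ contentK b w := by
      simp [wordContentK, Set.inter_singleton_nonempty]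
    have hgen : b ∈ genContentK C ({q₀} : Set (Fin k → ℕ)) ↔ q₀ ∈ Cont (C b) := by
      constructor
      · rintro ⟨α, hα, hmem⟩
        obtain ⟨x, hx, rfl⟩ := Ultrafilter.eq_pure_of_finite_mem (Set.finite_singleton q₀) hmem
        rw [mem_singleton_iff] at hx
        subst hx
        exact hα
      · intro hα
        exact ⟨pure q₀, hα, by simp⟩
    rw [← hword, hb, hgen]
  have hp := key p a (colf_fiber_p p)
  have hnej : Nonempty (Fin k) := ⟨⟨0, by omega⟩⟩
  constructor
  · intro h j
    rw [key _ _ (colf_fiber_const p j)]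
    intro j'
    exact (hp.mp h) j
  · intro h
    rw [hp]
    intro j
    have := (key _ _ (colf_fiber_const p j)).mp (h j)
    exact this (Classical.arbitrary (Fin k))

end Stmt14
end

section
/- Let A be a finite alphabet, k ≥ 1, and C = (C_ā)_{ā∈Aᵏ} a family of subsets of the space of ultrafilters on ℕᵏ satisfying the colouring condition. For a ∈ A set C_a^ℕ := {n ∈ ℕ : the constant tuple (n,...,n) belongs to Cont(C_{(a,...,a)})}. Then the sets C_a^ℕ (a ∈ A) are pairwise disjoint, their union is a downward closed subset of ℕ, and for every ā = (a₁,...,a_k) ∈ Aᵏ, Cont(C_ā) = {(p₁,...,p_k) ∈ ℕᵏ : ∀j, p_j ∈ C_{a_j}^ℕ}. -/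
open Set

namespace Stmt15

variable {A : Type*} {k : ℕ}

/-- `c_ā(w)`: the `ā`-content of a word `w`. -/
def contentK (a : Fin k → A) (w : List A) : Set (Fin k → ℕ) :=
  {i | ∀ j, ∃ h : i j < w.length, w.get ⟨i j, h⟩ = a j}

/-- `⟨w,Q⟩`: the content of a word `w` on `Q ⊆ ℕᵏ`. -/
def wordContentK (w : List A) (Q : Set (Fin k → ℕ)) : Set (Fin k → A) :=
  {a | (contentK a w ∩ Q).Nonempty}

/-- `⟨C,Q⟩`: the content of a generalized word `C` on `Q ⊆ ℕᵏ`. -/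
def genContentK (C : (Fin k → A) → Set (Ultrafilter (Fin k → ℕ)))
    (Q : Set (Fin k → ℕ)) : Set (Fin k → A) :=
  {a | ∃ α ∈ C a, Q ∈ α}

/-- `C` satisfies the colouring condition: for every finite colouring of `ℕᵏ` there
is a word with the same profile as `C`. -/
def ColouringCondition (C : (Fin k → A) → Set (Ultrafilter (Fin k → ℕ))) : Prop :=
  ∀ (l : ℕ), 1 ≤ l → ∀ Q : Fin l → Set (Fin k → ℕ),
    (Pairwise fun i j => Disjoint (Q i) (Q j)) → (⋃ i, Q i = Set.univ) →
    ∃ w : List A, ∀ i, wordContentK w (Q i) = genContentK C (Q i)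

/-- `Cont(C)`: the content of a set of ultrafilters on `ℕᵏ`, i.e. the tuples whose
principal ultrafilter lies in it. -/
def Cont (C : Set (Ultrafilter (Fin k → ℕ))) : Set (Fin k → ℕ) :=
  {i | (pure i : Ultrafilter (Fin k → ℕ)) ∈ C}

lemma mem_wordContentK_singleton {w : List A} {q : Fin k → ℕ} {a : Fin k → A} :
    a ∈ wordContentK w {q} ↔ ∀ j, ∃ h : q j < w.length, w.get ⟨q j, h⟩ = a j := by
  simp only [wordContentK, Set.mem_setOf_eq, Set.inter_singleton_nonempty]
  rfl

lemma genContentK_singleton (C : (Fin k → A) → Set (Ultrafilter (Fin k → ℕ)))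
    (q : Fin k → ℕ) : genContentK C {q} = {a | (pure q : Ultrafilter (Fin k → ℕ)) ∈ C a} := by
  ext a
  simp only [genContentK, Set.mem_setOf_eq]
  constructor
  · rintro ⟨α, hα, hmem⟩
    obtain ⟨x, hx, rfl⟩ := Ultrafilter.eq_pure_of_finite_mem (Set.finite_singleton q) hmem
    rcases hx with rfl
    exact hα
  · intro h
    exact ⟨pure q, h, rfl⟩

lemma exists_word [Fintype A] [Nonempty A]
    {C : (Fin k → A) → Set (Ultrafilter (Fin k → ℕ))}
    (hC : ColouringCondition C) (F : Finset (Fin k → ℕ)) :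
    ∃ w : List A, ∀ q ∈ F,
      wordContentK w {q} = {a | (pure q : Ultrafilter (Fin k → ℕ)) ∈ C a} := by
  classical
  have hcard : Fintype.card F = F.card := Fintype.card_coe F
  let e : F ≃ Fin F.card := (Fintype.equivFin F).trans (finCongr hcard)
  let Q : Fin (F.card + 1) → Set (Fin k → ℕ) := fun i =>
    if h : (i : ℕ) < F.card then {(e.symm ⟨i, h⟩ : Fin k → ℕ)} else (↑F)ᶜ
  have hQsing : ∀ q (hq : q ∈ F), Q ((e ⟨q, hq⟩).castSucc) = {q} := by
    intro q hq
    have h1 : ((e ⟨q, hq⟩).castSucc : ℕ) < F.card := (e ⟨q, hq⟩).isLt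
    simp only [Q, dif_pos h1]
    congr 1
    have : (⟨((e ⟨q, hq⟩).castSucc : ℕ), h1⟩ : Fin F.card) = e ⟨q, hq⟩ := by
      ext; rfl
    rw [this, Equiv.symm_apply_apply]
  have hdisj : Pairwise fun i j => Disjoint (Q i) (Q j) := by
    intro i j hij
    simp only [Q]
    split_ifs with hi hj hj
    · rw [Set.disjoint_singleton]
      intro h
      apply hij
      have h2 : (⟨(i : ℕ), hi⟩ : Fin F.card) = ⟨(j : ℕ), hj⟩ := e.symm.injective (Subtype.ext h)
      have h3 := congrArg Fin.val h2
      exact Fin.ext h3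
    · rw [Set.disjoint_singleton_left]
      simp only [Set.mem_compl_iff, not_not]
      exact (e.symm ⟨i, hi⟩).2
    · rw [Set.disjoint_singleton_right]
      simp only [Set.mem_compl_iff, not_not]
      exact (e.symm ⟨j, hj⟩).2
    · exact absurd (Fin.ext (by omega : (i : ℕ) = j)) hij
  have hunion : ⋃ i, Q i = Set.univ := by
    ext q
    simp only [Set.mem_iUnion, Set.mem_univ, iff_true]
    by_cases hq : q ∈ F
    · exact ⟨(e ⟨q, hq⟩).castSucc, by rw [hQsing q hq]; rfl⟩
    · refine ⟨Fin.last F.card, ?_⟩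
      simp only [Q, Fin.val_last, lt_self_iff_false, dif_neg, not_false_iff]
      exact hq
  obtain ⟨w, hw⟩ := hC (F.card + 1) (by omega) Q hdisj hunion
  refine ⟨w, fun q hq => ?_⟩
  have := hw ((e ⟨q, hq⟩).castSucc)
  rw [hQsing q hq] at this
  rw [this, genContentK_singleton]

/-- For `C` satisfying the colouring condition, the sets
`C_a^ℕ := {n : (n,...,n) ∈ Cont(C_{(a,...,a)})}` are pairwise disjoint, their union is
downward closed, and `Cont(C_ā)` is the product of the `C_{a_j}^ℕ`. -/
theorem statement15 (A : Type*) [Fintype A] [Nonempty A] (k : ℕ) (hk : 1 ≤ k)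
    (C : (Fin k → A) → Set (Ultrafilter (Fin k → ℕ)))
    (hC : ColouringCondition C) :
    (Pairwise fun a b : A =>
        Disjoint {n : ℕ | (fun _ => n) ∈ Cont (C fun _ => a)}
          {n : ℕ | (fun _ => n) ∈ Cont (C fun _ => b)}) ∧
    (∀ n m : ℕ, n ∈ (⋃ a : A, {n : ℕ | (fun _ => n) ∈ Cont (C fun _ => a)}) →
        m < n → m ∈ ⋃ a : A, {n : ℕ | (fun _ => n) ∈ Cont (C fun _ => a)}) ∧
    (∀ a : Fin k → A,
        Cont (C a) = {p : Fin k → ℕ |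
          ∀ j, p j ∈ {n : ℕ | (fun _ => n) ∈ Cont (C fun _ => a j)}}) := by
  classical
  have j0 : Fin k := ⟨0, hk⟩
  refine ⟨?_, ?_, ?_⟩
  · -- pairwise disjoint
    intro a b hab
    rw [Set.disjoint_left]
    intro n hna hnb
    obtain ⟨w, hw⟩ := exists_word hC {(fun _ => n : Fin k → ℕ)}
    have h1 : (fun _ => a) ∈ wordContentK w {(fun _ : Fin k => n)} := by
      rw [hw _ (Finset.mem_singleton_self _)]; exact hna
    have h2 : (fun _ => b) ∈ wordContentK w {(fun _ : Fin k => n)} := by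
      rw [hw _ (Finset.mem_singleton_self _)]; exact hnb
    rw [mem_wordContentK_singleton] at h1 h2
    obtain ⟨hlt, ha⟩ := h1 j0
    obtain ⟨hlt', hb⟩ := h2 j0
    exact hab (ha.symm.trans hb)
  · -- downward closed
    intro n m hn hm
    simp only [Set.mem_iUnion, Set.mem_setOf_eq] at hn ⊢
    obtain ⟨a, ha⟩ := hn
    obtain ⟨w, hw⟩ := exists_word hC
      (insert (fun _ => n : Fin k → ℕ) {(fun _ => m : Fin k → ℕ)})
    have h1 : (fun _ => a) ∈ wordContentK w {(fun _ : Fin k => n)} := by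
      rw [hw _ (Finset.mem_insert_self _ _)]; exact ha
    rw [mem_wordContentK_singleton] at h1
    obtain ⟨hlt, -⟩ := h1 j0
    have hmlt : m < w.length := lt_trans hm hlt
    refine ⟨w.get ⟨m, hmlt⟩, ?_⟩
    have h2 : (fun _ => w.get ⟨m, hmlt⟩) ∈ wordContentK w {(fun _ : Fin k => m)} :=
      mem_wordContentK_singleton.2 (fun j => ⟨hmlt, rfl⟩)
    rw [hw _ (Finset.mem_insert_of_mem (Finset.mem_singleton_self _))] at h2
    exact h2
  · -- product formula
    intro a
    ext p
    obtain ⟨w, hw⟩ := exists_word hC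
      (insert p (Finset.image (fun j => (fun _ => p j : Fin k → ℕ)) Finset.univ))
    have hmem : ∀ j : Fin k, (fun _ => p j : Fin k → ℕ) ∈
        insert p (Finset.image (fun j => (fun _ => p j : Fin k → ℕ)) Finset.univ) :=
      fun j => Finset.mem_insert_of_mem (Finset.mem_image_of_mem _ (Finset.mem_univ j))
    constructor
    · intro hp j
      have h1 : a ∈ wordContentK w {p} := by
        rw [hw p (Finset.mem_insert_self _ _)]; exact hp
      rw [mem_wordContentK_singleton] at h1
      obtain ⟨hlt, heq⟩ := h1 j
      have h2 : (fun _ => a j) ∈ wordContentK w {(fun _ : Fin k => p j)} :=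
        mem_wordContentK_singleton.2 (fun _ => ⟨hlt, heq⟩)
      rw [hw _ (hmem j)] at h2
      exact h2
    · intro hp
      have hall : ∀ j, ∃ h : p j < w.length, w.get ⟨p j, h⟩ = a j := by
        intro j
        have h2 : (fun _ => a j) ∈ wordContentK w {(fun _ : Fin k => p j)} := by
          rw [hw _ (hmem j)]; exact hp j
        rw [mem_wordContentK_singleton] at h2
        exact h2 j0
      have h1 : a ∈ wordContentK w {p} := mem_wordContentK_singleton.2 hall
      rw [hw p (Finset.mem_insert_self _ _)] at h1
      exact h1

end Stmt15
end

section
/- Let A be a finite alphabet. For all letters a, b, d ∈ A, every subset Q ⊆ ℕ, and every ultrafilter ν on A*⊗ℕ² with Ultrafilter.map π₁ ν = Ultrafilter.map π₂ ν, one has f_{a,b}⁻¹(L_{□^d_Q}) ∈ ν if and only if f_{b,a}⁻¹(L_{□^d_Q}) ∈ ν. -/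
open Set

namespace Stmt16

variable {A : Type*}

/-- `c_a(w)`: the set of positions of the word `w` carrying the letter `a`. -/
def contentSet (a : A) (w : List A) : Set ℕ :=
  {i | ∃ h : i < w.length, w.get ⟨i, h⟩ = a}

/-- `L_{□^d_Q}`. -/
def boxLang (d : A) (Q : Set ℕ) : Set (List A) :=
  {w | contentSet d w ⊆ Q}

/-- `A* ⊗ ℕ²`. -/
abbrev Dom2 (A : Type*) : Type _ :=
  {x : List A × ℕ × ℕ // x.2.1 < x.1.length ∧ x.2.2 < x.1.length}

/-- `f_{a,b}(w,j₁,j₂) = w(j₁→a)(j₂→b)` if `j₁ ≠ j₂`, and `w` otherwise. -/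
def f2 (a b : A) : Dom2 A → List A := fun x =>
  if x.1.2.1 ≠ x.1.2.2 then (x.1.1.set x.1.2.1 a).set x.1.2.2 b else x.1.1

lemma mem_box_f2 (a b d : A) (Q : Set ℕ) (x : Dom2 A) (hne : x.1.2.1 ≠ x.1.2.2) :
    f2 a b x ∈ boxLang d Q ↔
      ((∀ i, i ≠ x.1.2.1 → i ≠ x.1.2.2 → i ∈ contentSet d x.1.1 → i ∈ Q)
        ∧ (a = d → x.1.2.1 ∈ Q) ∧ (b = d → x.1.2.2 ∈ Q)) := by
  obtain ⟨⟨w, j1, j2⟩, h1, h2⟩ := x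
  simp only [f2, hne, if_pos, boxLang, contentSet, mem_setOf_eq] at *
  rw [if_pos hne]
  constructor
  · intro H
    refine ⟨fun i hi1 hi2 ⟨hil, hid⟩ => ?_, fun had => ?_, fun hbd => ?_⟩
    · refine H ⟨by simpa using hil, ?_⟩
      rw [List.get_eq_getElem, List.getElem_set_ne (Ne.symm hi2), List.getElem_set_ne (Ne.symm hi1)]
      exact hid
    · refine H ⟨by simpa using h1, ?_⟩
      simpa [List.get_eq_getElem, List.getElem_set_ne (Ne.symm hne),
        List.getElem_set_self] using had
    · refine H ⟨by simpa using h2, ?_⟩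
      simpa [List.get_eq_getElem, List.getElem_set_self] using hbd
  · rintro ⟨H, Ha, Hb⟩ i ⟨hil, hid⟩
    by_cases hi2 : i = j2
    · subst hi2
      apply Hb
      rw [List.get_eq_getElem, List.getElem_set_self] at hid
      exact hid
    · by_cases hi1 : i = j1
      · subst hi1
        apply Ha
        rw [List.get_eq_getElem, List.getElem_set_ne (fun h => hi2 h.symm),
          List.getElem_set_self] at hid
        exact hid
      · refine H i hi1 hi2 ⟨by simpa using hil, ?_⟩
        rw [List.get_eq_getElem, List.getElem_set_ne (fun h => hi2 h.symm),
          List.getElem_set_ne (fun h => hi1 h.symm)] at hid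
        exact hid

/-- Soundness check: for every `a, b, d ∈ A`, `Q ⊆ ℕ` and every ultrafilter `ν` on
`A* ⊗ ℕ²` with equal pushforwards along the two projections,
`f_{a,b}⁻¹(L_{□^d_Q}) ∈ ν` iff `f_{b,a}⁻¹(L_{□^d_Q}) ∈ ν`. -/
theorem statement16 (A : Type*) [Fintype A] [Nonempty A] (a b d : A) (Q : Set ℕ)
    (ν : Ultrafilter (Dom2 A))
    (hν : Ultrafilter.map (fun x => x.1.2.1) ν =
      Ultrafilter.map (fun x => x.1.2.2) ν) :
    f2 a b ⁻¹' boxLang d Q ∈ ν ↔ f2 b a ⁻¹' boxLang d Q ∈ ν := by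
  classical
  have key : ∀ S : Set ℕ, ((fun x : Dom2 A => x.1.2.1) ⁻¹' S ∈ ν ↔
      (fun x : Dom2 A => x.1.2.2) ⁻¹' S ∈ ν) := by
    intro S
    rw [← Ultrafilter.mem_map, ← Ultrafilter.mem_map, hν]
  set E : Set (Dom2 A) := {x | x.1.2.1 = x.1.2.2} with hEdef
  by_cases hE : E ∈ ν
  · have heq : (f2 a b ⁻¹' boxLang d Q) ∩ E = (f2 b a ⁻¹' boxLang d Q) ∩ E := by
      ext x
      simp only [mem_inter_iff, mem_preimage, hEdef, mem_setOf_eq]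
      constructor <;> rintro ⟨h, hx⟩ <;>
        exact ⟨by simpa [f2, hx] using h, hx⟩
    constructor <;> intro h
    · have := Filter.inter_mem h hE
      rw [heq] at this
      exact Filter.mem_of_superset this inter_subset_left
    · have := Filter.inter_mem h hE
      rw [← heq] at this
      exact Filter.mem_of_superset this inter_subset_left
  · have hEc : Eᶜ ∈ ν := Ultrafilter.compl_mem_iff_notMem.2 hE
    set R : Set (Dom2 A) :=
      {x | ∀ i, i ≠ x.1.2.1 → i ≠ x.1.2.2 → i ∈ contentSet d x.1.1 → i ∈ Q} with hRdef
    set T1 : A → Set (Dom2 A) := fun s => {x | s = d → x.1.2.1 ∈ Q} with hT1def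
    set T2 : A → Set (Dom2 A) := fun s => {x | s = d → x.1.2.2 ∈ Q} with hT2def
    have hfac : ∀ u v : A,
        (f2 u v ⁻¹' boxLang d Q) ∩ Eᶜ = R ∩ T1 u ∩ T2 v ∩ Eᶜ := by
      intro u v
      ext x
      simp only [mem_inter_iff, mem_preimage, mem_compl_iff, hEdef, hRdef, hT1def,
        hT2def, mem_setOf_eq, and_assoc]
      constructor
      · rintro ⟨h, hx⟩
        obtain ⟨h1, h2, h3⟩ := (mem_box_f2 u v d Q x hx).1 h
        exact ⟨h1, h2, h3, hx⟩
      · rintro ⟨h1, h2, h3, hx⟩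
        exact ⟨(mem_box_f2 u v d Q x hx).2 ⟨h1, h2, h3⟩, hx⟩
    have interIff : ∀ S T : Set (Dom2 A), (S ∩ T ∈ ν ↔ S ∈ ν ∧ T ∈ ν) :=
      fun S T => Filter.inter_mem_iff
    have hmem : ∀ u v : A,
        (f2 u v ⁻¹' boxLang d Q ∈ ν ↔ (R ∈ ν ∧ T1 u ∈ ν ∧ T2 v ∈ ν)) := by
      intro u v
      have : f2 u v ⁻¹' boxLang d Q ∈ ν ↔ (f2 u v ⁻¹' boxLang d Q) ∩ Eᶜ ∈ ν := by
        rw [interIff]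
        exact (and_iff_left hEc).symm
      rw [this, hfac u v, interIff, interIff, interIff]
      tauto
    have hT : ∀ s : A, (T1 s ∈ ν ↔ T2 s ∈ ν) := by
      intro s
      by_cases hs : s = d
      · have e1 : T1 s = (fun x : Dom2 A => x.1.2.1) ⁻¹' Q := by
          ext x; simp [hT1def, hs]
        have e2 : T2 s = (fun x : Dom2 A => x.1.2.2) ⁻¹' Q := by
          ext x; simp [hT2def, hs]
        rw [e1, e2]; exact key Q
      · have e1 : T1 s = univ := by ext x; simp [hT1def, hs]
        have e2 : T2 s = univ := by ext x; simp [hT2def, hs]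
        rw [e1, e2]
    rw [hmem a b, hmem b a]
    have ha := hT a
    have hb := hT b
    tauto


end Stmt16
end
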